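/- arXiv:2110.11472 — 7 statements merged into one kernel-verified Lean document; each statement's English description precedes it below -/
import Mathlib

section
/- (Cycle lemma, uniqueness of the admissible rotation.) For every integer n ≥ 1 and every sequence (d_1, …, d_n) of nonnegative integers with d_1 + ⋯ + d_n = n − 1, there exists exactly one index ℓ ∈ {1, …, n} such that the cyclically shifted sequence (d̃_1, …, d̃_n) := (d_ℓ, d_{ℓ+1}, …, d_n, d_1, …, d_{ℓ−1}) satisfies 1 + Σ_{i=1}^t (d̃_i − 1) > 0 for all 1 ≤ t ≤ n − 1. -/
/-- **Cycle lemma (uniqueness of the admissible rotation).**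
For every `n ≥ 1` and every sequence `d 0, …, d (n-1)` of nonnegative integers summing to
`n - 1`, there is exactly one index `ℓ ∈ {0, …, n-1}` such that the cyclically shifted
sequence `d̃ i := d ((ℓ + i) % n)` satisfies `1 + ∑_{i<t} (d̃ i − 1) > 0` for all
`1 ≤ t ≤ n − 1`. -/
theorem cycle_lemma_unique_rotation (n : ℕ) (hn : 1 ≤ n) (d : ℕ → ℕ)
    (hsum : ∑ i ∈ Finset.range n, d i = n - 1) :
    ∃! ℓ : Fin n, ∀ t : ℕ, 1 ≤ t → t ≤ n - 1 →
      0 < 1 + ∑ i ∈ Finset.range t, ((d ((ℓ.val + i) % n) : ℤ) - 1) := by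
  classical
  set S : ℕ → ℤ := fun t => ∑ i ∈ Finset.range t, ((d (i % n) : ℤ) - 1) with hSdef
  have hSn : S n = -1 := by
    have h1 : S n = ∑ i ∈ Finset.range n, ((d i : ℤ) - 1) := by
      apply Finset.sum_congr rfl
      intro i hi
      rw [Nat.mod_eq_of_lt (Finset.mem_range.mp hi)]
    have h2 : ∑ i ∈ Finset.range n, ((d i : ℤ) - 1)
        = (∑ i ∈ Finset.range n, (d i : ℤ)) - n := by
      rw [Finset.sum_sub_distrib]; simp
    have h3 : (∑ i ∈ Finset.range n, (d i : ℤ)) = ((n - 1 : ℕ) : ℤ) := by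
      rw [← Nat.cast_sum, hsum]
    rw [h1, h2, h3]
    have : ((n - 1 : ℕ) : ℤ) = (n : ℤ) - 1 := by
      rw [Nat.cast_sub hn]; simp
    rw [this]; ring
  have hper : ∀ t, S (t + n) = S t - 1 := by
    intro t
    induction t with
    | zero =>
      have h0 : S 0 = 0 := by simp [hSdef]
      simpa [h0] using hSn
    | succ t ih =>
      have e1 : t + 1 + n = (t + n) + 1 := by omega
      rw [e1]
      show S ((t + n) + 1) = S (t + 1) - 1
      rw [hSdef]
      simp only [Finset.sum_range_succ]
      have : (t + n) % n = t % n := Nat.add_mod_right t n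
      rw [this]
      have ih' : S (t + n) = S t - 1 := ih
      simp only [hSdef] at ih'
      rw [ih']; ring
  have hshift : ∀ ℓ t, ∑ i ∈ Finset.range t, ((d ((ℓ + i) % n) : ℤ) - 1)
      = S (ℓ + t) - S ℓ := by
    intro ℓ t
    induction t with
    | zero => simp
    | succ t ih =>
      rw [Finset.sum_range_succ, ih]
      simp only [hSdef]
      have e1 : ℓ + (t + 1) = (ℓ + t) + 1 := by omega
      rw [e1, Finset.sum_range_succ]
      ring
  -- reformulated condition
  set P : ℕ → Prop := fun ℓ => ∀ t : ℕ, 1 ≤ t → t ≤ n - 1 → S ℓ ≤ S (ℓ + t) with hPdef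
  have hP : ∀ ℓ : Fin n,
      (∀ t : ℕ, 1 ≤ t → t ≤ n - 1 →
        0 < 1 + ∑ i ∈ Finset.range t, ((d ((ℓ.val + i) % n) : ℤ) - 1)) ↔ P ℓ.val := by
    intro ℓ
    constructor
    · intro h t ht1 ht2
      have := h t ht1 ht2
      rw [hshift] at this
      linarith
    · intro h t ht1 ht2
      rw [hshift]
      have := h t ht1 ht2
      linarith
  -- no two distinct indices satisfy P
  have key : ∀ a b : ℕ, a < n → b < n → a < b → P a → P b → False := by
    intro a b ha hb hab hPa hPb
    have h1 : S a ≤ S b := by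
      have := hPa (b - a) (by omega) (by omega)
      have e : a + (b - a) = b := by omega
      rwa [e] at this
    have h2 : S b ≤ S (a + n) := by
      have := hPb (a + n - b) (by omega) (by omega)
      have e : b + (a + n - b) = a + n := by omega
      rwa [e] at this
    have h3 : S (a + n) = S a - 1 := hper a
    linarith
  -- existence: first minimizer of S on [0, n)
  obtain ⟨m, hm, hmin⟩ := Finset.exists_min_image (Finset.range n) S
    ⟨0, Finset.mem_range.mpr (by omega)⟩
  have hm' : m < n := Finset.mem_range.mp hm
  have hex : ∃ k, S k = S m := ⟨m, rfl⟩
  set ℓ := Nat.find hex with hℓdef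
  have hℓm : ℓ ≤ m := Nat.find_min' hex rfl
  have hℓn : ℓ < n := lt_of_le_of_lt hℓm hm'
  have hℓM : S ℓ = S m := Nat.find_spec hex
  have hfirst : ∀ k, k < ℓ → S k ≠ S m := fun k hk => Nat.find_min hex hk
  have hPℓ : P ℓ := by
    intro t ht1 ht2
    rcases lt_or_ge (ℓ + t) n with h | h
    · have := hmin (ℓ + t) (Finset.mem_range.mpr h)
      rw [hℓM]; exact this
    · -- ℓ + t ≥ n
      have hlt : ℓ + t - n < ℓ := by omega
      have hmem : ℓ + t - n < n := by omega
      have hge : S m ≤ S (ℓ + t - n) := hmin _ (Finset.mem_range.mpr hmem)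
      have hne : S (ℓ + t - n) ≠ S m := hfirst _ hlt
      have hstrict : S m < S (ℓ + t - n) := lt_of_le_of_ne hge (Ne.symm hne)
      have e : (ℓ + t - n) + n = ℓ + t := by omega
      have h4 := hper (ℓ + t - n)
      rw [e] at h4
      rw [h4, hℓM]
      omega
  refine ⟨⟨ℓ, hℓn⟩, (hP ⟨ℓ, hℓn⟩).mpr hPℓ, ?_⟩
  intro y hy
  have hPy : P y.val := (hP y).mp hy
  apply Fin.ext
  rcases lt_trichotomy y.val ℓ with h | h | h
  · exact absurd (key y.val ℓ y.isLt hℓn h hPy hPℓ) (by simp)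
  · exact h
  · exact absurd (key ℓ y.val hℓn y.isLt h hPℓ hPy) (by simp)
end

section
/- For every n ≥ 1, P(Ξ_n = n − 1 and S_t > 0 for all 1 ≤ t ≤ n − 1) = (1/n) · P(Ξ_n = n − 1). -/
open MeasureTheory ProbabilityTheory Finset

/-- Rotating the argument by `r` modulo `n` does not change a product over `range n`. -/
lemma prod_range_rot_aux {M : Type*} [CommMonoid M] (g : ℕ → M) {n r : ℕ} (hr : r ≤ n)
    (hn : 0 < n) :
    ∏ i ∈ range n, g ((i + r) % n) = ∏ i ∈ range n, g i := by
  refine Finset.prod_nbij' (fun a => (a + r) % n) (fun b => (b + (n - r)) % n) ?_ ?_ ?_ ?_ ?_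
  · intro a _; exact mem_range.mpr (Nat.mod_lt _ hn)
  · intro b _; exact mem_range.mpr (Nat.mod_lt _ hn)
  · intro a ha
    show ((a + r) % n + (n - r)) % n = a
    rw [Nat.mod_add_mod, show a + r + (n - r) = a + n by omega, Nat.add_mod_right,
      Nat.mod_eq_of_lt (mem_range.mp ha)]
  · intro b hb
    show ((b + (n - r)) % n + r) % n = b
    rw [Nat.mod_add_mod, show b + (n - r) + r = b + n by omega, Nat.add_mod_right,
      Nat.mod_eq_of_lt (mem_range.mp hb)]
  · intro a _; rfl

lemma sum_range_rot_aux {M : Type*} [AddCommMonoid M] (g : ℕ → M) {n r : ℕ} (hr : r ≤ n)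
    (hn : 0 < n) :
    ∑ i ∈ range n, g ((i + r) % n) = ∑ i ∈ range n, g i :=
  prod_range_rot_aux (M := Multiplicative M) g hr hn

/-- The (deterministic) cycle lemma: if `a 0 + ⋯ + a (n-1) = n - 1` then there is exactly
one cyclic rotation of the sequence whose partial sums satisfy the positivity condition. -/
lemma cycle_lemma (n : ℕ) (hn : 1 ≤ n) (a : ℕ → ℕ)
    (ha : ∑ i ∈ range n, a i = n - 1) :
    ∃! r, r < n ∧ ∀ t, 1 ≤ t → t ≤ n - 1 →
      0 < 1 + ∑ i ∈ range t, ((a ((i + r) % n) : ℤ) - 1) := by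
  set T : ℕ → ℤ := fun k => ∑ i ∈ range k, ((a (i % n) : ℤ) - 1) with hT
  have hn0 : 0 < n := hn
  have hTn : T n = -1 := by
    have h1 : ∑ i ∈ range n, ((a (i % n) : ℤ) - 1)
        = (∑ i ∈ range n, (a i : ℤ)) - n := by
      rw [Finset.sum_sub_distrib, Finset.sum_const, card_range, nsmul_eq_mul, mul_one]
      congr 1
      exact Finset.sum_congr rfl fun i hi => by rw [Nat.mod_eq_of_lt (mem_range.mp hi)]
    have h2 : (∑ i ∈ range n, (a i : ℤ)) = ((n - 1 : ℕ) : ℤ) := by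
      rw [← Nat.cast_sum, ha]
    have h3 : ((n - 1 : ℕ) : ℤ) = (n : ℤ) - 1 := by omega
    simp only [hT, h1, h2, h3]; ring
  have hTadd : ∀ k, T (k + n) = T k + T n := by
    intro k
    induction k with
    | zero => simp [hT]
    | succ k ih =>
      have e : k + 1 + n = (k + n) + 1 := by omega
      simp only [hT] at ih ⊢
      rw [e, Finset.sum_range_succ, ih, Finset.sum_range_succ, Nat.add_mod_right]
      ring
  have hstep : ∀ r t, T (r + t) = T r + ∑ i ∈ range t, ((a ((i + r) % n) : ℤ) - 1) := by
    intro r t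
    simp only [hT]
    rw [Finset.sum_range_add]
    congr 1
    exact Finset.sum_congr rfl fun i _ => by rw [Nat.add_comm r i]
  have hgood_iff : ∀ r, (∀ t, 1 ≤ t → t ≤ n - 1 →
      0 < 1 + ∑ i ∈ range t, ((a ((i + r) % n) : ℤ) - 1)) ↔
      (∀ t, 1 ≤ t → t ≤ n - 1 → T r ≤ T (r + t)) := by
    intro r
    constructor <;> intro h t ht1 ht2 <;> have := h t ht1 ht2 <;>
      have hs := hstep r t <;> omega
  -- choose the first index attaining the minimum of T on range n
  obtain ⟨r₀, hr₀mem, hr₀min⟩ :=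
    Finset.exists_min_image (range n) T ⟨0, mem_range.mpr hn0⟩
  have hex : ∃ r, r < n ∧ T r = T r₀ := ⟨r₀, mem_range.mp hr₀mem, rfl⟩
  set r := Nat.find hex with hrdef
  obtain ⟨hrn, hrval⟩ := Nat.find_spec hex
  have hmin' : ∀ k, k < r → k < n → T r₀ + 1 ≤ T k := by
    intro k hkr hkn
    have h1 := Nat.find_min hex hkr
    have h2 := hr₀min k (mem_range.mpr hkn)
    have : T k ≠ T r₀ := fun h => h1 ⟨hkn, h⟩
    omega
  have hmin : ∀ k, k < n → T r₀ ≤ T k := fun k hk => hr₀min k (mem_range.mpr hk)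
  refine ⟨r, ⟨hrn, (hgood_iff r).mpr ?_⟩, ?_⟩
  · intro t ht1 ht2
    rcases lt_or_ge (r + t) n with hlt | hge
    · rw [hrval]; exact hmin _ hlt
    · have hk : r + t = (r + t - n) + n := by omega
      have hkr : r + t - n < r := by omega
      have hkn : r + t - n < n := lt_trans hkr hrn
      have := hmin' _ hkr hkn
      rw [hk, hTadd, hTn, hrval]
      omega
  · rintro r' ⟨hr'n, hgood'⟩
    have hg := (hgood_iff r').mp hgood'
    by_contra hne
    rcases Nat.lt_or_ge r' r with hlt | hge
    · -- r' < r
      have ht1 : 1 ≤ r - r' := by omega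
      have ht2 : r - r' ≤ n - 1 := by omega
      have h1 := hg (r - r') ht1 ht2
      rw [show r' + (r - r') = r by omega, hrval] at h1
      have h2 := hmin' r' hlt hr'n
      omega
    · have hlt : r < r' := by omega
      have ht1 : 1 ≤ r + n - r' := by omega
      have ht2 : r + n - r' ≤ n - 1 := by omega
      have h1 := hg (r + n - r') ht1 ht2
      rw [show r' + (r + n - r') = r + n by omega, hTadd, hTn, hrval] at h1
      have h2 := hmin r' hr'n
      omega

/-- Let `ξ 0, ξ 1, …` be i.i.d. nonnegative-integer-valued random variables,
`Ξ_n := ξ 1 + ⋯ + ξ n` (here `∑ i ∈ range n, ξ i`) and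
`S_t := 1 + ∑_{i=1}^t (ξ_i − 1)`.  Then for every `n ≥ 1`,
`P(Ξ_n = n − 1 and S_t > 0 for all 1 ≤ t ≤ n − 1) = (1/n) · P(Ξ_n = n − 1)`. -/
theorem prob_degree_seq_with_positivity_eq_inv_n_mul
    {Ω : Type*} [MeasurableSpace Ω] (μ : Measure Ω) [IsProbabilityMeasure μ]
    (ξ : ℕ → Ω → ℕ) (hmeas : ∀ i, Measurable (ξ i))
    (hindep : iIndepFun ξ μ)
    (hident : ∀ i, IdentDistrib (ξ i) (ξ 0) μ μ)
    (n : ℕ) (hn : 1 ≤ n) :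
    μ {ω | (∑ i ∈ range n, ξ i ω) = n - 1 ∧
        ∀ t : ℕ, 1 ≤ t → t ≤ n - 1 →
          0 < 1 + ∑ i ∈ range t, ((ξ i ω : ℤ) - 1)} =
    (n : ENNReal)⁻¹ * μ {ω | (∑ i ∈ range n, ξ i ω) = n - 1} := by
  have hn0 : 0 < n := hn
  -- the rotated random vectors
  set X : ℕ → Ω → (Fin n → ℕ) := fun r ω i => ξ ((↑i + r) % n) ω with hXdef
  have hXmeas : ∀ r, Measurable (X r) :=
    fun r => measurable_pi_lambda _ fun i => hmeas _
  -- the target set in the product space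
  set B : Set (Fin n → ℕ) :=
    {v | (∑ i ∈ range n, v ⟨i % n, Nat.mod_lt _ hn0⟩) = n - 1 ∧
      ∀ t, 1 ≤ t → t ≤ n - 1 →
        0 < 1 + ∑ i ∈ range t, ((v ⟨i % n, Nat.mod_lt _ hn0⟩ : ℤ) - 1)} with hBdef
  have hB : MeasurableSet B := B.to_countable.measurableSet
  -- the events
  set A : ℕ → Set Ω := fun r =>
    {ω | (∑ i ∈ range n, ξ i ω) = n - 1 ∧
      ∀ t, 1 ≤ t → t ≤ n - 1 →
        0 < 1 + ∑ i ∈ range t, ((ξ ((i + r) % n) ω : ℤ) - 1)} with hAdef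
  have hA : ∀ r, r ≤ n → X r ⁻¹' B = A r := by
    intro r hr
    ext ω
    have key : ∀ i : ℕ, X r ω ⟨i % n, Nat.mod_lt _ hn0⟩ = ξ ((i + r) % n) ω := by
      intro i
      simp only [hXdef]
      rw [Nat.mod_add_mod]
    have hsum : (∑ i ∈ range n, X r ω ⟨i % n, Nat.mod_lt _ hn0⟩)
        = ∑ i ∈ range n, ξ i ω := by
      rw [Finset.sum_congr rfl fun i _ => key i]
      exact sum_range_rot_aux (fun j => ξ j ω) hr hn0
    simp only [Set.mem_preimage, hBdef, Set.mem_setOf_eq, hAdef, hsum]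
    constructor <;> rintro ⟨h1, h2⟩ <;> refine ⟨h1, fun t ht1 ht2 => ?_⟩ <;>
      have h2t := h2 t ht1 ht2
    · rwa [Finset.sum_congr rfl fun i _ => by rw [key i]] at h2t
    · rwa [Finset.sum_congr rfl fun i _ => by rw [key i]]
  -- all rotated vectors have the same law
  have hatom : ∀ r, r ≤ n → ∀ v : Fin n → ℕ,
      μ (X r ⁻¹' {v}) = ∏ j ∈ range n, μ (ξ 0 ⁻¹' {v ⟨j % n, Nat.mod_lt _ hn0⟩}) := by
    intro r hr v
    set vv : ℕ → ℕ := fun j => v ⟨j % n, Nat.mod_lt _ hn0⟩ with hvv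
    have hper : ∀ k, vv (k % n) = vv k := by
      intro k
      simp only [hvv]
      congr 1
      exact Fin.ext (by simp [Nat.mod_mod_of_dvd])
    have hvlt : ∀ (x : ℕ) (h : x < n), v ⟨x, h⟩ = vv x := by
      intro x h
      simp only [hvv]
      congr 1
      exact Fin.ext (by simp [Nat.mod_eq_of_lt h])
    have hpre : X r ⁻¹' {v} = ⋂ j ∈ range n, ξ j ⁻¹' {vv (j + (n - r))} := by
      ext ω
      simp only [Set.mem_preimage, Set.mem_singleton_iff, funext_iff, Set.mem_iInter,
        mem_range]
      constructor
      · intro h j hj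
        have := h ⟨(j + (n - r)) % n, Nat.mod_lt _ hn0⟩
        simp only [hXdef] at this
        rw [Nat.mod_add_mod, show j + (n - r) + r = j + n by omega, Nat.add_mod_right,
          Nat.mod_eq_of_lt hj] at this
        rw [this, hvlt _ (Nat.mod_lt _ hn0), hper]
      · intro h i
        have hj : (↑i + r) % n < n := Nat.mod_lt _ hn0
        have := h _ hj
        simp only [hXdef]
        rw [this]
        have : ((↑i + r) % n + (n - r)) % n = (i : ℕ) := by
          rw [Nat.mod_add_mod, show (i : ℕ) + r + (n - r) = ↑i + n by omega,
            Nat.add_mod_right, Nat.mod_eq_of_lt i.isLt]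
        rw [← hper, this]
        simp only [hvv]
        congr 1
        exact Fin.ext (by simp [Nat.mod_eq_of_lt i.isLt])
    rw [hpre, hindep.meas_biInter (fun j _ => ⟨{vv (j + (n - r))},
      measurableSet_singleton _, rfl⟩)]
    have hid : ∀ j (c : ℕ), μ (ξ j ⁻¹' {c}) = μ (ξ 0 ⁻¹' {c}) :=
      fun j c => (hident j).measure_mem_eq (measurableSet_singleton c)
    calc ∏ j ∈ range n, μ (ξ j ⁻¹' {vv (j + (n - r))})
        = ∏ j ∈ range n, μ (ξ 0 ⁻¹' {vv ((j + (n - r)) % n)}) := by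
          refine Finset.prod_congr rfl fun j _ => ?_
          rw [hid, hper]
      _ = ∏ j ∈ range n, μ (ξ 0 ⁻¹' {vv j}) :=
          prod_range_rot_aux (fun k => μ (ξ 0 ⁻¹' {vv k})) (by omega) hn0
  have hlaw : ∀ r, r ≤ n → μ.map (X r) = μ.map (X 0) := by
    intro r hr
    refine Measure.ext_of_singleton fun v => ?_
    rw [Measure.map_apply (hXmeas r) (measurableSet_singleton v),
      Measure.map_apply (hXmeas 0) (measurableSet_singleton v),
      hatom r hr v, hatom 0 (by omega) v]
  have hmuA : ∀ r, r ≤ n → μ (A r) = μ (A 0) := by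
    intro r hr
    rw [← hA r hr, ← Measure.map_apply (hXmeas r) hB, hlaw r hr,
      Measure.map_apply (hXmeas 0) hB, hA 0 (by omega)]
  -- the sets A r, r < n, partition the event {Ξ_n = n - 1}
  have hmeasA : ∀ r, r ≤ n → MeasurableSet (A r) := fun r hr =>
    hA r hr ▸ (hXmeas r) hB
  have hcover : {ω | (∑ i ∈ range n, ξ i ω) = n - 1} = ⋃ r ∈ range n, A r := by
    ext ω
    simp only [Set.mem_setOf_eq, Set.mem_iUnion, mem_range, hAdef]
    constructor
    · intro h
      obtain ⟨r, ⟨hrn, hrgood⟩, _⟩ := cycle_lemma n hn (fun i => ξ i ω) h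
      exact ⟨r, hrn, h, hrgood⟩
    · rintro ⟨r, _, h, _⟩; exact h
  have hdisj : (↑(range n) : Set ℕ).PairwiseDisjoint A := by
    intro r hr r' hr' hne
    simp only [Finset.coe_range, Set.mem_Iio] at hr hr'
    refine Set.disjoint_left.mpr fun ω hωr hωr' => ?_
    simp only [hAdef, Set.mem_setOf_eq] at hωr hωr'
    obtain ⟨r₁, -, huniq⟩ := cycle_lemma n hn (fun i => ξ i ω) hωr.1
    exact hne ((huniq r ⟨hr, hωr.2⟩).trans (huniq r' ⟨hr', hωr'.2⟩).symm)
  have hsum : μ {ω | (∑ i ∈ range n, ξ i ω) = n - 1} = n * μ (A 0) := by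
    rw [hcover, measure_biUnion_finset hdisj (fun r hr => hmeasA r (by
      simp only [mem_range] at hr; omega))]
    rw [Finset.sum_congr rfl (fun r hr => hmuA r (by
      simp only [mem_range] at hr; omega))]
    simp [Finset.sum_const, card_range, nsmul_eq_mul]
  -- identify the LHS set with A 0
  have hA0 : {ω | (∑ i ∈ range n, ξ i ω) = n - 1 ∧
      ∀ t : ℕ, 1 ≤ t → t ≤ n - 1 →
        0 < 1 + ∑ i ∈ range t, ((ξ i ω : ℤ) - 1)} = A 0 := by
    ext ω
    simp only [hAdef, Set.mem_setOf_eq]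
    have key : ∀ t, t ≤ n - 1 →
        (∑ i ∈ range t, ((ξ ((i + 0) % n) ω : ℤ) - 1))
          = ∑ i ∈ range t, ((ξ i ω : ℤ) - 1) := by
      intro t ht
      refine Finset.sum_congr rfl fun i hi => ?_
      have : i < n := by have := mem_range.mp hi; omega
      rw [Nat.add_zero, Nat.mod_eq_of_lt this]
    constructor <;> rintro ⟨h1, h2⟩ <;> refine ⟨h1, fun t ht1 ht2 => ?_⟩ <;>
      have h2t := h2 t ht1 ht2
    · rwa [key t ht2]
    · rwa [key t ht2] at h2t
  rw [hA0, hsum, ← mul_assoc, ENNReal.inv_mul_cancel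
    (Nat.cast_ne_zero.mpr (by omega)) (ENNReal.natCast_ne_top n), one_mul]
end

section
/- (Radius of convergence of the partition function of simply generated trees.) Under the stated assumptions, the radius of convergence ρ_Z of Z satisfies 0 < ρ_Z < ∞, the value τ := Σ_{n≥1} Z_n ρ_Z^n is finite and strictly positive, Φ(τ) is finite and strictly positive, and ρ_Z = τ / Φ(τ). -/
open scoped ENNReal

/-- The radius of convergence (in `[0,∞]`) of the power series with real
coefficients `a 0, a 1, a 2, …`: the supremum of all `r ≥ 0` at which
`∑ a n * r ^ n` converges. -/
noncomputable def radiusOfCoeff (a : ℕ → ℝ) : ℝ≥0∞ :=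
  ⨆ (r : NNReal) (_ : Summable fun n => a n * (r : ℝ) ^ n), (r : ℝ≥0∞)

open Finset PowerSeries


/-- truncated evaluation of a power series -/
noncomputable def pe (S : PowerSeries ℝ) (N : ℕ) (x : ℝ) : ℝ :=
  ∑ n ∈ Finset.range N, PowerSeries.coeff (R := ℝ) n S * x ^ n

lemma pe_nonneg {S : PowerSeries ℝ} (hS : ∀ n, 0 ≤ PowerSeries.coeff (R := ℝ) n S)
    {x : ℝ} (hx : 0 ≤ x) (N : ℕ) : 0 ≤ pe S N x :=
  Finset.sum_nonneg fun n _ => mul_nonneg (hS n) (pow_nonneg hx n)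

lemma pe_mono_N {S : PowerSeries ℝ} (hS : ∀ n, 0 ≤ PowerSeries.coeff (R := ℝ) n S)
    {x : ℝ} (hx : 0 ≤ x) {M N : ℕ} (h : M ≤ N) : pe S M x ≤ pe S N x :=
  Finset.sum_le_sum_of_subset_of_nonneg (Finset.range_subset_range.2 h)
    (fun n _ _ => mul_nonneg (hS n) (pow_nonneg hx n))

lemma coeff_mul_nonneg {S T : PowerSeries ℝ} (hS : ∀ n, 0 ≤ PowerSeries.coeff (R := ℝ) n S)
    (hT : ∀ n, 0 ≤ PowerSeries.coeff (R := ℝ) n T) (n : ℕ) :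
    0 ≤ PowerSeries.coeff (R := ℝ) n (S * T) := by
  rw [PowerSeries.coeff_mul]
  exact Finset.sum_nonneg fun p _ => mul_nonneg (hS p.1) (hT p.2)

lemma coeff_pow_nonneg {S : PowerSeries ℝ} (hS : ∀ n, 0 ≤ PowerSeries.coeff (R := ℝ) n S)
    (k n : ℕ) : 0 ≤ PowerSeries.coeff (R := ℝ) n (S ^ k) := by
  induction k generalizing n with
  | zero => simp [PowerSeries.coeff_one]; positivity
  | succ k ih =>
    rw [pow_succ]
    exact coeff_mul_nonneg (fun m => (by induction k with
      | zero => simpa using (by positivity : (0:ℝ) ≤ if m = 0 then 1 else 0)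
      | succ => exact ih m)) hS n

lemma coeff_pow_eq_zero {S : PowerSeries ℝ} (h0 : PowerSeries.constantCoeff (R := ℝ) S = 0)
    {k n : ℕ} (h : n < k) : PowerSeries.coeff (R := ℝ) n (S ^ k) = 0 := by
  induction k generalizing n with
  | zero => omega
  | succ k ih =>
    rw [pow_succ, PowerSeries.coeff_mul]
    apply Finset.sum_eq_zero
    intro p hp
    rw [Finset.HasAntidiagonal.mem_antidiagonal] at hp
    rcases Nat.eq_zero_or_pos p.2 with h2 | h2
    · have : PowerSeries.coeff (R := ℝ) p.2 S = 0 := by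
        rw [h2]; simpa [PowerSeries.coeff_zero_eq_constantCoeff] using h0
      rw [this, mul_zero]
    · have : p.1 < k := by omega
      rw [ih this, zero_mul]

lemma pe_one {N : ℕ} (hN : 1 ≤ N) {x : ℝ} : pe 1 N x = 1 := by
  unfold pe
  rw [Finset.sum_eq_single 0]
  · simp [PowerSeries.coeff_one]
  · intro n _ hn; simp [PowerSeries.coeff_one, hn]
  · intro h; exact absurd (Finset.mem_range.2 hN) h

/-- sum over range N of antidiagonal sums, as a sum over a finset of pairs -/
lemma sum_antidiag_eq_biUnion (N : ℕ) (g : ℕ × ℕ → ℝ) :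
    ∑ n ∈ Finset.range N, ∑ p ∈ Finset.HasAntidiagonal.antidiagonal n, g p
      = ∑ p ∈ (Finset.range N).biUnion Finset.HasAntidiagonal.antidiagonal, g p := by
  rw [Finset.sum_biUnion]
  intro a _ b _ hab
  simp only [Finset.disjoint_left]
  intro p hpa hpb
  rw [Finset.HasAntidiagonal.mem_antidiagonal] at hpa hpb
  exact hab (hpa ▸ hpb)

lemma pe_mul_expand (S T : PowerSeries ℝ) (N : ℕ) (x : ℝ) :
    pe (S * T) N x = ∑ p ∈ (Finset.range N).biUnion Finset.HasAntidiagonal.antidiagonal,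
      (PowerSeries.coeff (R := ℝ) p.1 S * x ^ p.1) * (PowerSeries.coeff (R := ℝ) p.2 T * x ^ p.2) := by
  rw [← sum_antidiag_eq_biUnion]
  unfold pe
  apply Finset.sum_congr rfl
  intro n _
  rw [PowerSeries.coeff_mul, Finset.sum_mul]
  apply Finset.sum_congr rfl
  intro p hp
  rw [Finset.HasAntidiagonal.mem_antidiagonal] at hp
  rw [← hp, pow_add]; ring

lemma pe_mul_le {S T : PowerSeries ℝ} (hS : ∀ n, 0 ≤ PowerSeries.coeff (R := ℝ) n S)
    (hT : ∀ n, 0 ≤ PowerSeries.coeff (R := ℝ) n T) {x : ℝ} (hx : 0 ≤ x) (N : ℕ) :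
    pe (S * T) N x ≤ pe S N x * pe T N x := by
  rw [pe_mul_expand]
  unfold pe
  rw [Finset.sum_mul_sum, ← Finset.sum_product']
  apply Finset.sum_le_sum_of_subset_of_nonneg
  · intro p hp
    simp only [Finset.mem_biUnion, Finset.mem_range, Finset.HasAntidiagonal.mem_antidiagonal] at hp
    obtain ⟨n, hn, hpn⟩ := hp
    simp only [Finset.mem_product, Finset.mem_range]
    omega
  · intro p _ _
    exact mul_nonneg (mul_nonneg (hS p.1) (pow_nonneg hx p.1))
      (mul_nonneg (hT p.2) (pow_nonneg hx p.2))

lemma le_pe_mul {S T : PowerSeries ℝ} (hS : ∀ n, 0 ≤ PowerSeries.coeff (R := ℝ) n S)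
    (hT : ∀ n, 0 ≤ PowerSeries.coeff (R := ℝ) n T) {x : ℝ} (hx : 0 ≤ x) (N M : ℕ) :
    pe S N x * pe T M x ≤ pe (S * T) (N + M) x := by
  rw [pe_mul_expand]
  unfold pe
  rw [Finset.sum_mul_sum, ← Finset.sum_product']
  apply Finset.sum_le_sum_of_subset_of_nonneg
  · intro p hp
    simp only [Finset.mem_product, Finset.mem_range] at hp
    simp only [Finset.mem_biUnion, Finset.mem_range, Finset.HasAntidiagonal.mem_antidiagonal]
    exact ⟨p.1 + p.2, by omega, rfl⟩
  · intro p _ _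
    exact mul_nonneg (mul_nonneg (hS p.1) (pow_nonneg hx p.1))
      (mul_nonneg (hT p.2) (pow_nonneg hx p.2))

lemma pe_pow_le {S : PowerSeries ℝ} (hS : ∀ n, 0 ≤ PowerSeries.coeff (R := ℝ) n S)
    {x : ℝ} (hx : 0 ≤ x) {N : ℕ} (hN : 1 ≤ N) (k : ℕ) :
    pe (S ^ k) N x ≤ (pe S N x) ^ k := by
  induction k with
  | zero => simp [pe_one hN]
  | succ k ih =>
    calc pe (S ^ (k+1)) N x = pe (S ^ k * S) N x := by rw [← pow_succ]
    _ ≤ pe (S ^ k) N x * pe S N x := pe_mul_le (coeff_pow_nonneg hS k) hS hx N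
    _ ≤ (pe S N x) ^ k * pe S N x :=
        mul_le_mul_of_nonneg_right ih (pe_nonneg hS hx N)
    _ = (pe S N x) ^ (k+1) := (pow_succ _ _).symm

lemma le_pe_pow {S : PowerSeries ℝ} (hS : ∀ n, 0 ≤ PowerSeries.coeff (R := ℝ) n S)
    {x : ℝ} (hx : 0 ≤ x) (N k : ℕ) :
    (pe S N x) ^ k ≤ pe (S ^ k) (N * k + 1) x := by
  induction k with
  | zero => simp [pe_one (le_refl 1), pow_zero]
  | succ k ih =>
    calc (pe S N x) ^ (k+1) = (pe S N x) ^ k * pe S N x := pow_succ _ _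
    _ ≤ pe (S ^ k) (N * k + 1) x * pe S N x :=
        mul_le_mul_of_nonneg_right ih (pe_nonneg hS hx N)
    _ ≤ pe (S ^ k * S) (N * k + 1 + N) x :=
        le_pe_mul (coeff_pow_nonneg hS k) hS hx _ _
    _ = pe (S ^ (k+1)) (N * (k+1) + 1) x := by rw [← pow_succ]; ring_nf

section rec
variable {w : ℕ → ℝ} {Z : PowerSeries ℝ}

lemma coeff_succ_finsum (hZ0 : PowerSeries.constantCoeff (R := ℝ) Z = 0)
    (hZeq : ∀ n : ℕ, PowerSeries.coeff (R := ℝ) (n + 1) Z =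
      ∑' k : ℕ, w k * PowerSeries.coeff (R := ℝ) n (Z ^ k))
    (m : ℕ) {K : ℕ} (hK : m + 1 ≤ K) :
    PowerSeries.coeff (R := ℝ) (m + 1) Z = ∑ k ∈ Finset.range K, w k * PowerSeries.coeff (R := ℝ) m (Z ^ k) := by
  rw [hZeq m]
  apply tsum_eq_sum
  intro k hk
  rw [Finset.mem_range, not_lt] at hk
  rw [coeff_pow_eq_zero hZ0 (by omega), mul_zero]

lemma pe_rec (hZ0 : PowerSeries.constantCoeff (R := ℝ) Z = 0)
    (hZeq : ∀ n : ℕ, PowerSeries.coeff (R := ℝ) (n + 1) Z =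
      ∑' k : ℕ, w k * PowerSeries.coeff (R := ℝ) n (Z ^ k))
    (N : ℕ) (x : ℝ) :
    pe Z (N + 1) x = x * ∑ k ∈ Finset.range N, w k * pe (Z ^ k) N x := by
  unfold pe
  rw [Finset.sum_range_succ']
  have h0 : PowerSeries.coeff (R := ℝ) 0 Z * x ^ 0 = 0 := by
    simp [PowerSeries.coeff_zero_eq_constantCoeff, hZ0]
  rw [h0, add_zero]
  have : ∀ m ∈ Finset.range N, PowerSeries.coeff (R := ℝ) (m + 1) Z * x ^ (m + 1)
      = ∑ k ∈ Finset.range N, x * (w k * (PowerSeries.coeff (R := ℝ) m (Z ^ k) * x ^ m)) := by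
    intro m hm
    rw [Finset.mem_range] at hm
    rw [coeff_succ_finsum hZ0 hZeq m (by omega : m + 1 ≤ N), Finset.sum_mul]
    apply Finset.sum_congr rfl; intro k _; ring
  rw [Finset.sum_congr rfl this, Finset.sum_comm]
  simp only [Finset.mul_sum, mul_assoc]

end rec

section analytic
variable {w : ℕ → ℝ} {Z : PowerSeries ℝ}

lemma ineq_U (hw : ∀ k, 0 ≤ w k) (hZ0 : PowerSeries.constantCoeff (R := ℝ) Z = 0)
    (hZeq : ∀ n : ℕ, PowerSeries.coeff (R := ℝ) (n + 1) Z =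
      ∑' k : ℕ, w k * PowerSeries.coeff (R := ℝ) n (Z ^ k))
    (hZnn : ∀ n : ℕ, 0 ≤ PowerSeries.coeff (R := ℝ) n Z)
    {x : ℝ} (hx : 0 ≤ x) {N : ℕ} (hN : 1 ≤ N) :
    pe Z (N + 1) x ≤ x * ∑ k ∈ Finset.range N, w k * (pe Z N x) ^ k := by
  rw [pe_rec hZ0 hZeq]
  apply mul_le_mul_of_nonneg_left _ hx
  apply Finset.sum_le_sum
  intro k _
  exact mul_le_mul_of_nonneg_left (pe_pow_le hZnn hx hN k) (hw k)

lemma ineq_D (hw : ∀ k, 0 ≤ w k) (hZ0 : PowerSeries.constantCoeff (R := ℝ) Z = 0)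
    (hZeq : ∀ n : ℕ, PowerSeries.coeff (R := ℝ) (n + 1) Z =
      ∑' k : ℕ, w k * PowerSeries.coeff (R := ℝ) n (Z ^ k))
    (hZnn : ∀ n : ℕ, 0 ≤ PowerSeries.coeff (R := ℝ) n Z)
    {x : ℝ} (hx : 0 ≤ x) (K M : ℕ) :
    x * ∑ k ∈ Finset.range K, w k * (pe Z M x) ^ k ≤ pe Z (M * K + K + 1) x := by
  set L := M * K + K with hL
  have step1 : ∑ k ∈ Finset.range K, w k * (pe Z M x) ^ k
      ≤ ∑ k ∈ Finset.range L, w k * pe (Z ^ k) L x := by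
    calc ∑ k ∈ Finset.range K, w k * (pe Z M x) ^ k
        ≤ ∑ k ∈ Finset.range K, w k * pe (Z ^ k) L x := by
          apply Finset.sum_le_sum
          intro k hk
          rw [Finset.mem_range] at hk
          apply mul_le_mul_of_nonneg_left _ (hw k)
          calc (pe Z M x) ^ k ≤ pe (Z ^ k) (M * k + 1) x := le_pe_pow hZnn hx M k
          _ ≤ pe (Z ^ k) L x := pe_mono_N (coeff_pow_nonneg hZnn k) hx (by
              simp only [hL]; nlinarith)
      _ ≤ ∑ k ∈ Finset.range L, w k * pe (Z ^ k) L x := by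
          apply Finset.sum_le_sum_of_subset_of_nonneg
            (Finset.range_subset_range.2 (by omega))
          intro k _ _
          exact mul_nonneg (hw k) (pe_nonneg (coeff_pow_nonneg hZnn k) hx L)
  calc x * ∑ k ∈ Finset.range K, w k * (pe Z M x) ^ k
      ≤ x * ∑ k ∈ Finset.range L, w k * pe (Z ^ k) L x :=
        mul_le_mul_of_nonneg_left step1 hx
    _ = pe Z (L + 1) x := (pe_rec hZ0 hZeq L x).symm

lemma funEq (hw : ∀ k, 0 ≤ w k) (hZ0 : PowerSeries.constantCoeff (R := ℝ) Z = 0)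
    (hZeq : ∀ n : ℕ, PowerSeries.coeff (R := ℝ) (n + 1) Z =
      ∑' k : ℕ, w k * PowerSeries.coeff (R := ℝ) n (Z ^ k))
    (hZnn : ∀ n : ℕ, 0 ≤ PowerSeries.coeff (R := ℝ) n Z)
    {x : ℝ} (hx : 0 < x)
    (hsum : Summable fun n => PowerSeries.coeff (R := ℝ) n Z * x ^ n) :
    Summable (fun k => w k * (∑' n : ℕ, PowerSeries.coeff (R := ℝ) n Z * x ^ n) ^ k) ∧
    (∑' n : ℕ, PowerSeries.coeff (R := ℝ) n Z * x ^ n)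
      = x * ∑' k : ℕ, w k * (∑' n : ℕ, PowerSeries.coeff (R := ℝ) n Z * x ^ n) ^ k := by
  have hx' : (0:ℝ) ≤ x := le_of_lt hx
  set t := ∑' n : ℕ, PowerSeries.coeff (R := ℝ) n Z * x ^ n with ht
  have htnn : 0 ≤ t := tsum_nonneg fun n => mul_nonneg (hZnn n) (pow_nonneg hx' n)
  have hpe_le : ∀ N, pe Z N x ≤ t := fun N =>
    Summable.sum_le_tsum (Finset.range N) (fun n _ => mul_nonneg (hZnn n) (pow_nonneg hx' n)) hsum
  have htend : Filter.Tendsto (fun N => pe Z N x) Filter.atTop (nhds t) :=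
    hsum.hasSum.tendsto_sum_nat
  -- lower bound pieces
  have hD : ∀ K M : ℕ, x * ∑ k ∈ Finset.range K, w k * (pe Z M x) ^ k ≤ t :=
    fun K M => le_trans (ineq_D hw hZ0 hZeq hZnn hx' K M) (hpe_le _)
  have hDlim : ∀ K : ℕ, x * ∑ k ∈ Finset.range K, w k * t ^ k ≤ t := by
    intro K
    have htendK : Filter.Tendsto
        (fun M => x * ∑ k ∈ Finset.range K, w k * (pe Z M x) ^ k) Filter.atTop
        (nhds (x * ∑ k ∈ Finset.range K, w k * t ^ k)) := by
      apply Filter.Tendsto.const_mul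
      apply tendsto_finset_sum
      intro k _
      exact (htend.pow k).const_mul (w k)
    exact le_of_tendsto htendK (Filter.Eventually.of_forall fun M => hD K M)
  have hΦnn : ∀ k, 0 ≤ w k * t ^ k := fun k => mul_nonneg (hw k) (pow_nonneg htnn k)
  have hΦpart : ∀ K, ∑ k ∈ Finset.range K, w k * t ^ k ≤ t / x := by
    intro K
    rw [le_div_iff₀ hx]
    calc (∑ k ∈ Finset.range K, w k * t ^ k) * x
        = x * ∑ k ∈ Finset.range K, w k * t ^ k := mul_comm _ _
      _ ≤ t := hDlim K
  have hΦsum : Summable (fun k => w k * t ^ k) := summable_of_sum_range_le hΦnn hΦpart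
  have hΦle : x * (∑' k : ℕ, w k * t ^ k) ≤ t := by
    have := Real.tsum_le_of_sum_range_le hΦnn hΦpart
    calc x * (∑' k : ℕ, w k * t ^ k) ≤ x * (t / x) :=
          mul_le_mul_of_nonneg_left this hx'
      _ = t := by field_simp
  refine ⟨hΦsum, le_antisymm ?_ hΦle⟩
  -- upper bound : t ≤ x * Φ(t)
  have hU : ∀ N : ℕ, 1 ≤ N → pe Z (N + 1) x ≤ x * ∑' k : ℕ, w k * t ^ k := by
    intro N hN
    calc pe Z (N + 1) x ≤ x * ∑ k ∈ Finset.range N, w k * (pe Z N x) ^ k :=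
          ineq_U hw hZ0 hZeq hZnn hx' hN
      _ ≤ x * ∑ k ∈ Finset.range N, w k * t ^ k := by
          apply mul_le_mul_of_nonneg_left _ hx'
          apply Finset.sum_le_sum
          intro k _
          exact mul_le_mul_of_nonneg_left
            (pow_le_pow_left₀ (pe_nonneg hZnn hx' N) (hpe_le N) k) (hw k)
      _ ≤ x * ∑' k : ℕ, w k * t ^ k := by
          apply mul_le_mul_of_nonneg_left _ hx'
          exact Summable.sum_le_tsum _ (fun k _ => hΦnn k) hΦsum
  have htend' : Filter.Tendsto (fun N => pe Z (N + 1) x) Filter.atTop (nhds t) :=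
    htend.comp (Filter.tendsto_add_atTop_nat 1)
  exact le_of_tendsto htend'
    (Filter.eventually_atTop.2 ⟨1, fun N hN => hU N hN⟩)

end analytic

section radius

lemma le_radius {a : ℕ → ℝ} {r : NNReal} (h : Summable fun n => a n * (r : ℝ) ^ n) :
    (r : ℝ≥0∞) ≤ radiusOfCoeff a := by
  unfold radiusOfCoeff
  exact le_iSup₂ (f := fun (r : NNReal) (_ : Summable fun n => a n * (r:ℝ)^n) => (r : ℝ≥0∞)) r h

lemma summable_of_lt_radius {a : ℕ → ℝ} (ha : ∀ n, 0 ≤ a n) {r : NNReal}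
    (h : (r : ℝ≥0∞) < radiusOfCoeff a) : Summable fun n => a n * (r : ℝ) ^ n := by
  unfold radiusOfCoeff at h
  rw [lt_iSup_iff] at h
  obtain ⟨r', hr'⟩ := h
  by_cases hs : Summable fun n => a n * (r' : ℝ) ^ n
  · rw [iSup_pos hs] at hr'
    have hrr : r ≤ r' := le_of_lt (by exact_mod_cast hr')
    apply Summable.of_nonneg_of_le (fun n => mul_nonneg (ha n) (pow_nonneg r.coe_nonneg n)) _ hs
    intro n
    exact mul_le_mul_of_nonneg_left (pow_le_pow_left₀ r.coe_nonneg (by exact_mod_cast hrr) n) (ha n)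
  · rw [iSup_neg hs] at hr'
    exact absurd hr' (by simp)

end radius


/-- **Radius of convergence of the partition function of simply generated trees.**
Let `w = (w k)` be nonnegative with `w 0 > 0` and `w k > 0` for some `k ≥ 2`, let
`Φ(x) = ∑ w k x^k` have positive radius of convergence, and let `Z` be the formal power
series with zero constant term satisfying `Z = x·Φ(Z)` (coefficientwise:
`Z_{n+1} = ∑' k, w k · [x^n] Z^k`), with nonnegative coefficients.  Then the radius of
convergence `ρ_Z` of `Z` satisfies `0 < ρ_Z < ∞`, the value `τ := ∑ Z_n ρ_Z^n` is finite
and strictly positive, `Φ(τ)` is finite and strictly positive, and `ρ_Z = τ / Φ(τ)`. -/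
theorem radius_partition_function_simply_generated_trees
    (w : ℕ → ℝ) (hw : ∀ k, 0 ≤ w k) (hw0 : 0 < w 0) (hw2 : ∃ k, 2 ≤ k ∧ 0 < w k)
    (hρ : 0 < radiusOfCoeff w)
    (Z : PowerSeries ℝ) (hZ0 : PowerSeries.constantCoeff (R := ℝ) Z = 0)
    (hZeq : ∀ n : ℕ, PowerSeries.coeff (R := ℝ) (n + 1) Z =
      ∑' k : ℕ, w k * PowerSeries.coeff (R := ℝ) n (Z ^ k))
    (hZnn : ∀ n : ℕ, 0 ≤ PowerSeries.coeff (R := ℝ) n Z) :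
    0 < radiusOfCoeff (fun n => PowerSeries.coeff (R := ℝ) n Z) ∧
    radiusOfCoeff (fun n => PowerSeries.coeff (R := ℝ) n Z) < ⊤ ∧
    Summable (fun n => PowerSeries.coeff (R := ℝ) n Z *
      (radiusOfCoeff fun m => PowerSeries.coeff (R := ℝ) m Z).toReal ^ n) ∧
    0 < (∑' n : ℕ, PowerSeries.coeff (R := ℝ) n Z *
      (radiusOfCoeff fun m => PowerSeries.coeff (R := ℝ) m Z).toReal ^ n) ∧
    Summable (fun k => w k * (∑' n : ℕ, PowerSeries.coeff (R := ℝ) n Z *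
      (radiusOfCoeff fun m => PowerSeries.coeff (R := ℝ) m Z).toReal ^ n) ^ k) ∧
    0 < (∑' k : ℕ, w k * (∑' n : ℕ, PowerSeries.coeff (R := ℝ) n Z *
      (radiusOfCoeff fun m => PowerSeries.coeff (R := ℝ) m Z).toReal ^ n) ^ k) ∧
    (radiusOfCoeff fun m => PowerSeries.coeff (R := ℝ) m Z).toReal =
      (∑' n : ℕ, PowerSeries.coeff (R := ℝ) n Z *
        (radiusOfCoeff fun m => PowerSeries.coeff (R := ℝ) m Z).toReal ^ n) /
      (∑' k : ℕ, w k * (∑' n : ℕ, PowerSeries.coeff (R := ℝ) n Z *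
        (radiusOfCoeff fun m => PowerSeries.coeff (R := ℝ) m Z).toReal ^ n) ^ k) := by
  -- coeff 1 = w 0
  have hZ1 : PowerSeries.coeff (R := ℝ) 1 Z = w 0 := by
    have := hZeq 0
    rw [show (0:ℕ)+1 = 1 from rfl] at this
    rw [this, tsum_eq_single 0]
    · simp
    · intro k hk
      rw [coeff_pow_eq_zero hZ0 (Nat.pos_of_ne_zero hk), mul_zero]
  -- a small positive point where w-series is summable
  obtain ⟨s, hs_pos, hs_sum⟩ : ∃ s : ℝ, 0 < s ∧ Summable fun k => w k * s ^ k := by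
    unfold radiusOfCoeff at hρ
    rw [lt_iSup_iff] at hρ
    obtain ⟨r', hr'⟩ := hρ
    by_cases hs : Summable fun k => w k * (r' : ℝ) ^ k
    · rw [iSup_pos hs] at hr'
      exact ⟨r', by exact_mod_cast hr', hs⟩
    · rw [iSup_neg hs] at hr'
      exact absurd hr' (by simp)
  set c : ℝ := ∑' k, w k * s ^ k with hc
  have hc_pos : 0 < c := by
    have h0 : w 0 * s ^ 0 ≤ c :=
      Summable.le_tsum hs_sum 0 fun k _ => mul_nonneg (hw k) (pow_nonneg hs_pos.le k)
    simpa using lt_of_lt_of_le (by simpa using hw0) h0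
  set x0 : ℝ := s / c with hx0
  have hx0_pos : 0 < x0 := div_pos hs_pos hc_pos
  -- bounded partial sums at x0
  have hpe_x0 : ∀ N, pe Z N x0 ≤ s := by
    intro N
    induction N with
    | zero => simpa [pe] using hs_pos.le
    | succ N ih =>
      rcases Nat.eq_zero_or_pos N with h | hN
      · subst h
        simpa [pe, PowerSeries.coeff_zero_eq_constantCoeff, hZ0] using hs_pos.le
      calc pe Z (N + 1) x0 ≤ x0 * ∑ k ∈ Finset.range N, w k * (pe Z N x0) ^ k :=
            ineq_U hw hZ0 hZeq hZnn hx0_pos.le hN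
        _ ≤ x0 * ∑ k ∈ Finset.range N, w k * s ^ k := by
            apply mul_le_mul_of_nonneg_left _ hx0_pos.le
            apply Finset.sum_le_sum
            intro k _
            exact mul_le_mul_of_nonneg_left
              (pow_le_pow_left₀ (pe_nonneg hZnn hx0_pos.le N) ih k) (hw k)
        _ ≤ x0 * c := by
            apply mul_le_mul_of_nonneg_left _ hx0_pos.le
            exact Summable.sum_le_tsum _ (fun k _ => mul_nonneg (hw k) (pow_nonneg hs_pos.le k)) hs_sum
        _ = s := by rw [hx0]; field_simp
  have hsum_x0 : Summable fun n => PowerSeries.coeff (R := ℝ) n Z * x0 ^ n :=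
    summable_of_sum_range_le (fun n => mul_nonneg (hZnn n) (pow_nonneg hx0_pos.le n))
      (fun N => hpe_x0 N)
  set R : ℝ≥0∞ := radiusOfCoeff (fun n => PowerSeries.coeff (R := ℝ) n Z) with hR
  have hR_pos : 0 < R := by
    refine lt_of_lt_of_le ?_ (le_radius (a := fun n => PowerSeries.coeff (R := ℝ) n Z)
      (r := x0.toNNReal) ?_)
    · exact_mod_cast Real.toNNReal_pos.2 hx0_pos
    · convert hsum_x0 using 2 with n
      rw [Real.coe_toNNReal _ hx0_pos.le]
  obtain ⟨a, ha2, hwa⟩ := hw2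
  -- finiteness of the radius
  set r1 : ℝ := max (2 / w 0) (2 / w a) with hr1
  have hbound : ∀ r : NNReal, (Summable fun n => PowerSeries.coeff (R := ℝ) n Z * (r:ℝ) ^ n) →
      (r : ℝ) ≤ r1 := by
    intro r hsum
    by_contra hgt
    push_neg at hgt
    have hx : (0:ℝ) < r := lt_trans (lt_of_lt_of_le (by positivity) (le_max_left _ _)) hgt
    obtain ⟨hΦsum, heq⟩ := funEq hw hZ0 hZeq hZnn hx hsum
    set t : ℝ := ∑' n : ℕ, PowerSeries.coeff (R := ℝ) n Z * (r:ℝ) ^ n with hts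
    have ht1 : 1 < t := by
      have h1 : w 0 * (r:ℝ) ≤ t := by
        have := Summable.le_tsum hsum 1 fun n _ => mul_nonneg (hZnn n) (pow_nonneg hx.le n)
        simpa [hZ1] using this
      have h2 : 2 / w 0 < (r:ℝ) := lt_of_le_of_lt (le_max_left _ _) hgt
      have : 2 < w 0 * (r:ℝ) := by
        rw [div_lt_iff₀ hw0] at h2; linarith [h2]
      linarith
    have htpos : (0:ℝ) < t := lt_trans one_pos ht1
    have hta : w a * t ^ a ≤ ∑' k : ℕ, w k * t ^ k :=
      Summable.le_tsum hΦsum a fun k _ => mul_nonneg (hw k) (pow_nonneg htpos.le k)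
    have hge : (r:ℝ) * (w a * t ^ a) ≤ t := by
      calc (r:ℝ) * (w a * t ^ a) ≤ (r:ℝ) * ∑' k : ℕ, w k * t ^ k :=
            mul_le_mul_of_nonneg_left hta hx.le
        _ = t := heq.symm
    have hra : 2 / w a < (r:ℝ) := lt_of_le_of_lt (le_max_right _ _) hgt
    have hrwa : 2 < (r:ℝ) * w a := by rw [div_lt_iff₀ hwa] at hra; linarith
    have hpa : t ^ 2 ≤ t ^ a := pow_le_pow_right₀ ht1.le ha2
    have htapos : 0 < t ^ a := pow_pos htpos a
    nlinarith [mul_pos (sub_pos.2 hrwa) htapos, sq_nonneg t, mul_pos htpos htpos]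
  have hR_lt : R < ⊤ := by
    have hr1nn : 0 ≤ r1 := le_trans (by positivity) (le_max_left _ _)
    have : R ≤ (r1.toNNReal : ℝ≥0∞) := by
      rw [hR]
      unfold radiusOfCoeff
      apply iSup₂_le
      intro r hr
      have := hbound r hr
      exact_mod_cast (by rwa [← Real.coe_toNNReal r1 hr1nn, NNReal.coe_le_coe] at this
        : r ≤ r1.toNNReal)
    exact lt_of_le_of_lt this ENNReal.coe_lt_top
  set ρ : ℝ := R.toReal with hρdef
  have hρ_pos : 0 < ρ := ENNReal.toReal_pos hR_pos.ne' hR_lt.ne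
  -- summability strictly below the radius
  have hsum_lt : ∀ r : ℝ, 0 ≤ r → r < ρ →
      Summable fun n => PowerSeries.coeff (R := ℝ) n Z * r ^ n := by
    intro r hr0 hrρ
    have h1 : (r.toNNReal : ℝ≥0∞) < R := by
      have h2 : r.toNNReal < R.toNNReal := by
        have h3 := (Real.toNNReal_lt_toNNReal_iff hρ_pos).2 hrρ
        rwa [hρdef, ENNReal.toReal, Real.toNNReal_coe] at h3
      rw [← ENNReal.coe_toNNReal hR_lt.ne]
      exact_mod_cast h2
    have := summable_of_lt_radius hZnn (r := r.toNNReal) (by rwa [← hR])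
    rwa [Real.coe_toNNReal _ hr0] at this
  -- upper bound for the sums below the radius
  set B : ℝ := max 1 (2 / (ρ * w a)) with hB
  have hf_le_B : ∀ r : ℝ, ρ / 2 ≤ r → r < ρ →
      (∑' n : ℕ, PowerSeries.coeff (R := ℝ) n Z * r ^ n) ≤ B := by
    intro r hr2 hrρ
    have hr0 : 0 < r := lt_of_lt_of_le (by positivity) hr2
    have hsum := hsum_lt r hr0.le hrρ
    obtain ⟨hΦsum, heq⟩ := funEq hw hZ0 hZeq hZnn hr0 hsum
    set t : ℝ := ∑' n : ℕ, PowerSeries.coeff (R := ℝ) n Z * r ^ n with hts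
    rcases le_or_gt t 1 with h | ht1
    · exact le_trans h (le_max_left _ _)
    have htpos : (0:ℝ) < t := lt_trans one_pos ht1
    have hta : w a * t ^ a ≤ ∑' k : ℕ, w k * t ^ k :=
      Summable.le_tsum hΦsum a fun k _ => mul_nonneg (hw k) (pow_nonneg htpos.le k)
    have hge : r * (w a * t ^ a) ≤ t := by
      calc r * (w a * t ^ a) ≤ r * ∑' k : ℕ, w k * t ^ k :=
            mul_le_mul_of_nonneg_left hta hr0.le
        _ = t := heq.symm
    have hpa : t ^ 2 ≤ t ^ a := pow_le_pow_right₀ ht1.le ha2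
    -- from t ≥ r * w a * t^2 : r * w a * t ≤ 1
    have hkey : r * w a * t ≤ 1 := by nlinarith [pow_pos htpos a]
    have hrwa : 0 < r * w a := mul_pos hr0 hwa
    have : t ≤ 1 / (r * w a) := by rw [le_div_iff₀ hrwa]; linarith
    refine le_trans this (le_trans ?_ (le_max_right _ _))
    have hρwa : 0 < ρ * w a := mul_pos hρ_pos hwa
    rw [div_le_div_iff₀ (by positivity) hρwa]
    nlinarith
  -- continuity of truncated evaluation
  have hpe_cont : ∀ N : ℕ, Continuous fun r : ℝ => pe Z N r := by
    intro N
    unfold pe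
    exact continuous_finset_sum _ fun n _ => continuous_const.mul (continuous_pow n)
  have hIoc : ρ ∈ Set.Ioc (ρ / 2) ρ := ⟨half_lt_self hρ_pos, le_refl ρ⟩
  have hIoc0 : ρ ∈ Set.Ioc (0:ℝ) ρ := ⟨hρ_pos, le_refl ρ⟩
  have hZrnn : ∀ (r : ℝ), 0 ≤ r → ∀ n, (0:ℝ) ≤ PowerSeries.coeff (R := ℝ) n Z * r ^ n :=
    fun r hr n => mul_nonneg (hZnn n) (pow_nonneg hr n)
  -- partial sums at ρ are bounded by B
  have hpeρ_le : ∀ N, pe Z N ρ ≤ B := by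
    intro N
    have htnd : Filter.Tendsto (fun r => pe Z N r) (nhdsWithin ρ (Set.Iio ρ))
        (nhds (pe Z N ρ)) := ((hpe_cont N).tendsto ρ).mono_left nhdsWithin_le_nhds
    apply le_of_tendsto htnd
    filter_upwards [Ioo_mem_nhdsLT_of_mem hIoc] with r hr
    have hr0 : 0 < r := lt_of_le_of_lt (by positivity) hr.1
    calc pe Z N r ≤ ∑' n : ℕ, PowerSeries.coeff (R := ℝ) n Z * r ^ n :=
          Summable.sum_le_tsum _ (fun n _ => hZrnn r hr0.le n) (hsum_lt r hr0.le hr.2)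
      _ ≤ B := hf_le_B r hr.1.le hr.2
  have hsum_ρ : Summable fun n => PowerSeries.coeff (R := ℝ) n Z * ρ ^ n :=
    summable_of_sum_range_le (hZrnn ρ hρ_pos.le) hpeρ_le
  set τ : ℝ := ∑' n : ℕ, PowerSeries.coeff (R := ℝ) n Z * ρ ^ n with hτdef
  have hτ_pos : 0 < τ := by
    have h1 : w 0 * ρ ≤ τ := by
      have := Summable.le_tsum hsum_ρ 1 fun n _ => hZrnn ρ hρ_pos.le n
      simpa [hZ1] using this
    nlinarith
  have hF_le_τ : ∀ r : ℝ, 0 ≤ r → r ≤ ρ →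
      (∑' n : ℕ, PowerSeries.coeff (R := ℝ) n Z * r ^ n) ≤ τ := by
    intro r hr0 hrρ
    rcases eq_or_lt_of_le hrρ with h | h
    · rw [h]
    · exact Summable.tsum_le_tsum
        (fun n => mul_le_mul_of_nonneg_left (pow_le_pow_left₀ hr0 hrρ n) (hZnn n))
        (hsum_lt r hr0 h) hsum_ρ
  set F : ℝ → ℝ := fun r => ∑' n : ℕ, PowerSeries.coeff (R := ℝ) n Z * r ^ n with hFdef
  have hFt : Filter.Tendsto F (nhdsWithin ρ (Set.Iio ρ)) (nhds τ) := by
    rw [tendsto_order]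
    constructor
    · intro b hb
      have htendρ : Filter.Tendsto (fun N => pe Z N ρ) Filter.atTop (nhds τ) :=
        hsum_ρ.hasSum.tendsto_sum_nat
      obtain ⟨N, hN⟩ := ((tendsto_order.1 htendρ).1 b hb).exists
      have hev1 : ∀ᶠ r in nhdsWithin ρ (Set.Iio ρ), b < pe Z N r :=
        (((hpe_cont N).tendsto ρ).mono_left nhdsWithin_le_nhds).eventually
          (eventually_gt_nhds hN)
      filter_upwards [hev1, Ioo_mem_nhdsLT_of_mem hIoc0] with r h1 h2
      exact lt_of_lt_of_le h1
        (Summable.sum_le_tsum _ (fun n _ => hZrnn r h2.1.le n) (hsum_lt r h2.1.le h2.2))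
    · intro b hb
      filter_upwards [Ioo_mem_nhdsLT_of_mem hIoc0] with r h2
      exact lt_of_le_of_lt (hF_le_τ r h2.1.le h2.2.le) hb
  -- partial sums of Φ at τ are bounded by τ/ρ
  have hSK : ∀ K : ℕ, ∑ k ∈ Finset.range K, w k * τ ^ k ≤ τ / ρ := by
    intro K
    have h1 : Filter.Tendsto (fun r => ∑ k ∈ Finset.range K, w k * (F r) ^ k)
        (nhdsWithin ρ (Set.Iio ρ)) (nhds (∑ k ∈ Finset.range K, w k * τ ^ k)) :=
      tendsto_finset_sum _ fun k _ => (hFt.pow k).const_mul (w k)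
    have h2 : Filter.Tendsto (fun r : ℝ => τ / r) (nhdsWithin ρ (Set.Iio ρ))
        (nhds (τ / ρ)) :=
      tendsto_const_nhds.div ((continuous_id.tendsto ρ).mono_left nhdsWithin_le_nhds)
        hρ_pos.ne'
    apply le_of_tendsto_of_tendsto h1 h2
    filter_upwards [Ioo_mem_nhdsLT_of_mem hIoc0] with r hr
    have hr0 : 0 < r := hr.1
    obtain ⟨hΦs, heq⟩ := funEq hw hZ0 hZeq hZnn hr0 (hsum_lt r hr0.le hr.2)
    have hFnn : 0 ≤ F r := tsum_nonneg fun n => hZrnn r hr0.le n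
    calc ∑ k ∈ Finset.range K, w k * (F r) ^ k
        ≤ ∑' k : ℕ, w k * (F r) ^ k :=
          Summable.sum_le_tsum _ (fun k _ => mul_nonneg (hw k) (pow_nonneg hFnn k)) hΦs
      _ = F r / r := by
          rw [eq_div_iff hr0.ne', mul_comm]
          exact heq.symm
      _ ≤ τ / r := by
          gcongr
          exact hF_le_τ r hr0.le hr.2.le
  have hΦτnn : ∀ k, (0:ℝ) ≤ w k * τ ^ k := fun k => mul_nonneg (hw k) (pow_nonneg hτ_pos.le k)
  have hΦτ_sum : Summable fun k => w k * τ ^ k := summable_of_sum_range_le hΦτnn hSK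
  set Φτ : ℝ := ∑' k : ℕ, w k * τ ^ k with hΦτdef
  have hΦτ_le : Φτ ≤ τ / ρ := Real.tsum_le_of_sum_range_le hΦτnn hSK
  have hΦτ_pos : 0 < Φτ := by
    have := Summable.le_tsum hΦτ_sum 0 fun k _ => hΦτnn k
    simp only [pow_zero, mul_one] at this
    exact lt_of_lt_of_le hw0 this
  have h_le1 : ρ * Φτ ≤ τ := by
    rw [le_div_iff₀ hρ_pos] at hΦτ_le
    linarith
  have h_le2 : τ ≤ ρ * Φτ := by
    apply le_of_tendsto hFt
    filter_upwards [Ioo_mem_nhdsLT_of_mem hIoc0] with r hr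
    have hr0 : 0 < r := hr.1
    obtain ⟨hΦs, heq⟩ := funEq hw hZ0 hZeq hZnn hr0 (hsum_lt r hr0.le hr.2)
    have hFnn : 0 ≤ F r := tsum_nonneg fun n => hZrnn r hr0.le n
    calc F r = r * ∑' k : ℕ, w k * (F r) ^ k := heq
      _ ≤ r * Φτ := by
          apply mul_le_mul_of_nonneg_left _ hr0.le
          exact Summable.tsum_le_tsum (fun k => mul_le_mul_of_nonneg_left
            (pow_le_pow_left₀ hFnn (hF_le_τ r hr0.le hr.2.le) k) (hw k)) hΦs hΦτ_sum
      _ ≤ ρ * Φτ := mul_le_mul_of_nonneg_right hr.2.le hΦτ_pos.le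
  have hfinal : ρ = τ / Φτ := by
    rw [eq_div_iff hΦτ_pos.ne']
    linarith
  exact ⟨hR_pos, hR_lt, hsum_ρ, hτ_pos, hΦτ_sum, hΦτ_pos, hfinal⟩
end

section
/- (Tilted weight sequence is a critical offspring distribution with exponential moments.) Suppose additionally that 0 < τ < ρ, where ρ is the radius of convergence of Φ. Then the sequence π_k := ω_k τ^k / Φ(τ) (k ∈ ℕ₀) is a probability distribution on ℕ₀, it has mean one, i.e. Σ_{k≥0} k π_k = 1 (equivalently τ Φ′(τ) = Φ(τ)), and there exists ε > 0 such that Σ_{k≥0} π_k (1 + ε)^k < ∞. -/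
open scoped ENNReal

open Finset

lemma radius_ge_of_summable {a : ℕ → ℝ} {t : ℝ} (ht : 0 ≤ t)
    (h : Summable fun n => a n * t ^ n) : ENNReal.ofReal t ≤ radiusOfCoeff a := by
  have h' : Summable fun n => a n * ((t.toNNReal : ℝ)) ^ n := by
    simpa [Real.coe_toNNReal t ht] using h
  refine le_iSup_of_le t.toNNReal (le_iSup_of_le h' ?_)
  simp [ENNReal.ofReal]

lemma exists_summable_of_lt_radius {a : ℕ → ℝ} {s : ℝ}
    (h : ENNReal.ofReal s < radiusOfCoeff a) :
    ∃ r : NNReal, s < (r : ℝ) ∧ Summable fun n => a n * (r : ℝ) ^ n := by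
  rw [radiusOfCoeff, lt_iSup_iff] at h
  obtain ⟨r, hr⟩ := h
  rw [lt_iSup_iff] at hr
  obtain ⟨hsum, hlt⟩ := hr
  refine ⟨r, ?_, hsum⟩
  by_contra hle
  push_neg at hle
  exact absurd hlt (not_lt.2 (by
    rw [← ENNReal.ofReal_coe_nnreal]
    exact ENNReal.ofReal_le_ofReal hle))


set_option maxHeartbeats 2000000 in
/-- **Tilted weight sequence is a critical offspring distribution with exponential
moments.**  In the setting of simply generated trees with weight sequence `w`
(`w 0 > 0`, `w k > 0` for some `k ≥ 2`, `Φ(x) = ∑ w k x^k` of positive radius of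
convergence `ρ`, and `Z` the nonnegative formal power series solution of `Z = xΦ(Z)`
with radius `ρ_Z` and `τ := ∑ Z_n ρ_Z^n`), suppose additionally `0 < τ < ρ`.  Then
`π k := w k τ^k / Φ(τ)` is a probability distribution on ℕ, it has mean one, i.e.
`∑ k π k = 1` (equivalently `τ Φ′(τ) = Φ(τ)`), and there is `ε > 0` with
`∑ π k (1+ε)^k < ∞`. -/
theorem tilted_weight_sequence_is_critical
    (w : ℕ → ℝ) (hw : ∀ k, 0 ≤ w k) (hw0 : 0 < w 0) (hw2 : ∃ k, 2 ≤ k ∧ 0 < w k)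
    (hρ : 0 < radiusOfCoeff w)
    (Z : PowerSeries ℝ) (hZ0 : PowerSeries.constantCoeff Z = 0)
    (hZeq : ∀ n : ℕ, PowerSeries.coeff (n + 1) Z =
      ∑' k : ℕ, w k * PowerSeries.coeff n (Z ^ k))
    (hZnn : ∀ n : ℕ, 0 ≤ PowerSeries.coeff n Z)
    (τ : ℝ)
    (hτdef : τ = ∑' n : ℕ, PowerSeries.coeff n Z *
      (radiusOfCoeff fun m => PowerSeries.coeff m Z).toReal ^ n)
    (hτpos : 0 < τ) (hτρ : ENNReal.ofReal τ < radiusOfCoeff w) :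
    (∀ k : ℕ, 0 ≤ w k * τ ^ k / ∑' j : ℕ, w j * τ ^ j) ∧
    Summable (fun k : ℕ => w k * τ ^ k / ∑' j : ℕ, w j * τ ^ j) ∧
    (∑' k : ℕ, w k * τ ^ k / ∑' j : ℕ, w j * τ ^ j) = 1 ∧
    Summable (fun k : ℕ => (k : ℝ) * (w k * τ ^ k / ∑' j : ℕ, w j * τ ^ j)) ∧
    (∑' k : ℕ, (k : ℝ) * (w k * τ ^ k / ∑' j : ℕ, w j * τ ^ j)) = 1 ∧
    τ * (∑' k : ℕ, (k : ℝ) * w k * τ ^ (k - 1)) = (∑' j : ℕ, w j * τ ^ j) ∧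
    ∃ ε : ℝ, 0 < ε ∧
      Summable (fun k : ℕ => (w k * τ ^ k / ∑' j : ℕ, w j * τ ^ j) * (1 + ε) ^ k) := by
  -- basic coefficient facts
  have hc_nonneg : ∀ k n, 0 ≤ PowerSeries.coeff n (Z ^ k) := by
    intro k
    induction k with
    | zero => intro n; rw [pow_zero, PowerSeries.coeff_one]; positivity
    | succ k ih =>
      intro n
      rw [pow_succ', PowerSeries.coeff_mul]
      exact Finset.sum_nonneg fun p _ => mul_nonneg (hZnn p.1) (ih p.2)
  have hc_zero : ∀ k n, n < k → PowerSeries.coeff n (Z ^ k) = 0 := by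
    have hX : (PowerSeries.X : PowerSeries ℝ) ∣ Z := PowerSeries.X_dvd_iff.mpr hZ0
    intro k n hnk
    exact PowerSeries.X_pow_dvd_iff.mp (pow_dvd_pow_of_dvd hX k) n hnk
  have hZeq' : ∀ n, PowerSeries.coeff (n + 1) Z
      = ∑ k ∈ range (n + 1), w k * PowerSeries.coeff n (Z ^ k) := by
    intro n
    rw [hZeq n]
    refine tsum_eq_sum fun k hk => ?_
    have : n < k := by
      simpa using fun h => hk (Finset.mem_range.mpr h)
    rw [hc_zero k n this, mul_zero]
  have lemP : ∀ (t : ℝ), 0 ≤ t → ∀ k N,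
      ∑ n ∈ range N, PowerSeries.coeff n (Z ^ k) * t ^ n
        ≤ (∑ n ∈ range N, PowerSeries.coeff n Z * t ^ n) ^ k := by
    intro t ht k
    induction k with
    | zero =>
      intro N
      have : ∀ n ∈ range N, PowerSeries.coeff n ((Z:PowerSeries ℝ) ^ 0) * t ^ n
          = if n = 0 then 1 else 0 := by
        intro n _
        rw [pow_zero, PowerSeries.coeff_one]
        split
        · next h => simp [h]
        · simp
      rw [Finset.sum_congr rfl this, Finset.sum_ite_eq' (range N) 0 (fun _ => (1:ℝ)), pow_zero]
      split <;> norm_num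
    | succ k ih =>
      intro N
      have hrw : ∀ n ∈ range N, PowerSeries.coeff n (Z ^ (k+1)) * t ^ n
          = ∑ p ∈ Finset.HasAntidiagonal.antidiagonal n,
              (PowerSeries.coeff p.1 Z * t ^ p.1) *
                (PowerSeries.coeff p.2 (Z ^ k) * t ^ p.2) := by
        intro n _
        rw [pow_succ', PowerSeries.coeff_mul, Finset.sum_mul]
        refine Finset.sum_congr rfl fun p hp => ?_
        have hpn : p.1 + p.2 = n := Finset.HasAntidiagonal.mem_antidiagonal.mp hp
        rw [← hpn, pow_add]; ring
      rw [Finset.sum_congr rfl hrw]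
      have hdisj : (↑(range N) : Set ℕ).PairwiseDisjoint Finset.HasAntidiagonal.antidiagonal := by
        intro m _ n _ hmn
        refine Finset.disjoint_left.mpr fun p hpm hpn => hmn ?_
        rw [← Finset.HasAntidiagonal.mem_antidiagonal.mp hpm, ← Finset.HasAntidiagonal.mem_antidiagonal.mp hpn]
      rw [← Finset.sum_biUnion hdisj]
      have hsub : (range N).biUnion Finset.HasAntidiagonal.antidiagonal ⊆ range N ×ˢ range N := by
        intro p hp
        obtain ⟨n, hn, hpn⟩ := Finset.mem_biUnion.mp hp
        have hpn' := Finset.HasAntidiagonal.mem_antidiagonal.mp hpn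
        have hnN := Finset.mem_range.mp hn
        refine Finset.mem_product.mpr ⟨Finset.mem_range.mpr ?_, Finset.mem_range.mpr ?_⟩ <;> omega
      have hle := Finset.sum_le_sum_of_subset_of_nonneg hsub (by
        intro p _ _
        exact mul_nonneg (mul_nonneg (hZnn p.1) (pow_nonneg ht p.1))
          (mul_nonneg (hc_nonneg k p.2) (pow_nonneg ht p.2)))
      refine hle.trans ?_
      rw [Finset.sum_product]
      have : ∑ i ∈ range N, ∑ j ∈ range N,
          (PowerSeries.coeff i Z * t ^ i) * (PowerSeries.coeff j (Z ^ k) * t ^ j)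
          = (∑ i ∈ range N, PowerSeries.coeff i Z * t ^ i) *
            (∑ j ∈ range N, PowerSeries.coeff j (Z ^ k) * t ^ j) := by
        rw [Finset.sum_mul_sum]
      rw [this, pow_succ']
      refine mul_le_mul_of_nonneg_left (ih N) ?_
      exact Finset.sum_nonneg fun n _ => mul_nonneg (hZnn n) (pow_nonneg ht n)
  have hstep : ∀ t s : ℝ, 0 ≤ t → 0 ≤ s → Summable (fun k => w k * s ^ k) → ∀ N : ℕ,
      (∑ n ∈ range N, PowerSeries.coeff n Z * t ^ n ≤ s) →
      ∑ n ∈ range (N + 1), PowerSeries.coeff n Z * t ^ n ≤ t * ∑' j : ℕ, w j * s ^ j := by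
    intro t s ht hs hsum N hN
    have hz_nonneg : (0:ℝ) ≤ ∑ n ∈ range N, PowerSeries.coeff n Z * t ^ n :=
      Finset.sum_nonneg fun n _ => mul_nonneg (hZnn n) (pow_nonneg ht n)
    rw [Finset.sum_range_succ']
    have h0 : PowerSeries.coeff 0 Z * t ^ 0 = 0 := by
      have : PowerSeries.coeff 0 Z = 0 := by
        rw [← PowerSeries.coeff_zero_eq_constantCoeff] at hZ0; exact hZ0
      rw [this, zero_mul]
    rw [h0, add_zero]
    have step1 : ∀ i ∈ range N, PowerSeries.coeff (i+1) Z * t ^ (i+1)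
        ≤ ∑ k ∈ range N, (w k * PowerSeries.coeff i (Z ^ k)) * t ^ (i+1) := by
      intro i hi
      rw [hZeq' i, ← Finset.sum_mul]
      refine mul_le_mul_of_nonneg_right ?_ (pow_nonneg ht _)
      refine Finset.sum_le_sum_of_subset_of_nonneg ?_ ?_
      · exact Finset.range_subset_range.mpr (Finset.mem_range.mp hi)
      · intro k _ _
        exact mul_nonneg (hw k) (hc_nonneg k i)
    refine (Finset.sum_le_sum step1).trans ?_
    have hcomm := Finset.sum_comm (s := range N) (t := range N)
      (f := fun i k => (w k * PowerSeries.coeff i (Z ^ k)) * t ^ (i+1))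
    rw [hcomm]
    have step2 : ∀ k ∈ range N,
        ∑ i ∈ range N, (w k * PowerSeries.coeff i (Z ^ k)) * t ^ (i+1)
        = t * (w k * ∑ i ∈ range N, PowerSeries.coeff i (Z ^ k) * t ^ i) := by
      intro k _
      rw [Finset.mul_sum, Finset.mul_sum]
      exact Finset.sum_congr rfl fun i _ => by rw [pow_succ]; ring
    rw [Finset.sum_congr rfl step2, ← Finset.mul_sum]
    refine mul_le_mul_of_nonneg_left ?_ ht
    have step3 : ∀ k ∈ range N,
        w k * ∑ i ∈ range N, PowerSeries.coeff i (Z ^ k) * t ^ i ≤ w k * s ^ k := by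
      intro k _
      refine mul_le_mul_of_nonneg_left ?_ (hw k)
      exact (lemP t ht k N).trans (pow_le_pow_left₀ hz_nonneg hN k)
    refine (Finset.sum_le_sum step3).trans ?_
    exact Summable.sum_le_tsum (range N) (fun k _ => mul_nonneg (hw k) (pow_nonneg hs k)) hsum
  -- the radius of Z and basic facts about it
  obtain ⟨r, hrdef⟩ : ∃ r : ℝ,
      (radiusOfCoeff fun m => PowerSeries.coeff m Z).toReal = r := ⟨_, rfl⟩
  have hr0 : 0 ≤ r := hrdef ▸ ENNReal.toReal_nonneg
  have hτr : τ = ∑' n : ℕ, PowerSeries.coeff n Z * r ^ n := by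
    rw [hτdef, hrdef]
  have hrpos : 0 < r := by
    rcases hr0.eq_or_lt with h | h
    · exfalso
      have hτ0 : τ = 0 := by
        rw [hτr]
        have hz : ∀ n, PowerSeries.coeff n Z * r ^ n = 0 := by
          intro n
          cases n with
          | zero =>
            have : PowerSeries.coeff 0 Z = 0 := by
              rw [← PowerSeries.coeff_zero_eq_constantCoeff] at hZ0; exact hZ0
            rw [this, zero_mul]
          | succ n => rw [← h, zero_pow (Nat.succ_ne_zero n), mul_zero]
        simp [hz]
      linarith
    · exact h
  have hZsum : Summable fun n => PowerSeries.coeff n Z * r ^ n := by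
    by_contra h
    rw [hτr, tsum_eq_zero_of_not_summable h] at hτpos
    exact lt_irrefl _ hτpos
  have hρZ_ne_top : (radiusOfCoeff fun m => PowerSeries.coeff m Z) ≠ ⊤ := by
    intro h
    rw [h] at hrdef
    simp at hrdef
    rw [← hrdef] at hrpos
    exact lt_irrefl _ hrpos
  -- Cauchy products: the series of `Z^k` at `r` sums to `τ^k`
  have hck : ∀ k : ℕ, Summable (fun n => PowerSeries.coeff n (Z ^ k) * r ^ n) ∧
      (∑' n : ℕ, PowerSeries.coeff n (Z ^ k) * r ^ n) = τ ^ k := by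
    intro k
    induction k with
    | zero =>
      constructor
      · refine summable_of_ne_finset_zero (s := {0}) fun n hn => ?_
        rw [pow_zero, PowerSeries.coeff_one, if_neg (by simpa using hn), zero_mul]
      · rw [pow_zero]
        calc (∑' n : ℕ, PowerSeries.coeff n ((Z:PowerSeries ℝ) ^ 0) * r ^ n)
            = PowerSeries.coeff 0 ((Z:PowerSeries ℝ) ^ 0) * r ^ 0 := by
              refine tsum_eq_single 0 fun n hn => ?_
              rw [pow_zero, PowerSeries.coeff_one, if_neg hn, zero_mul]
          _ = 1 := by rw [pow_zero, PowerSeries.coeff_one, if_pos rfl, pow_zero, mul_one]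
    | succ k ih =>
      have hf : Summable fun n => ‖PowerSeries.coeff n Z * r ^ n‖ := by
        refine hZsum.congr fun n => ?_
        rw [Real.norm_of_nonneg (mul_nonneg (hZnn n) (pow_nonneg hr0 n))]
      have hg : Summable fun n => ‖PowerSeries.coeff n (Z ^ k) * r ^ n‖ := by
        refine ih.1.congr fun n => ?_
        rw [Real.norm_of_nonneg (mul_nonneg (hc_nonneg k n) (pow_nonneg hr0 n))]
      have hterm : ∀ n : ℕ, (∑ p ∈ Finset.HasAntidiagonal.antidiagonal n,
            (PowerSeries.coeff p.1 Z * r ^ p.1) * (PowerSeries.coeff p.2 (Z ^ k) * r ^ p.2))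
          = PowerSeries.coeff n (Z ^ (k+1)) * r ^ n := by
        intro n
        rw [pow_succ', PowerSeries.coeff_mul, Finset.sum_mul]
        refine Finset.sum_congr rfl fun p hp => ?_
        have hpn : p.1 + p.2 = n := Finset.HasAntidiagonal.mem_antidiagonal.mp hp
        rw [← hpn, pow_add]; ring
      have hsum1 : Summable fun n => PowerSeries.coeff n (Z ^ (k+1)) * r ^ n := by
        have := (summable_norm_sum_mul_antidiagonal_of_summable_norm hf hg).of_norm
        exact this.congr hterm
      constructor
      · exact hsum1
      · have key := tsum_mul_tsum_eq_tsum_sum_antidiagonal_of_summable_norm hf hg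
        rw [tsum_congr hterm] at key
        rw [← key, ← hτr, ih.2, pow_succ']
  -- get a point R with τ < R < radius of w
  obtain ⟨R, hτR, hRsum⟩ := exists_summable_of_lt_radius hτρ
  have hRpos : 0 < (R : ℝ) := lt_trans hτpos hτR
  have hwS : ∀ s : ℝ, 0 ≤ s → s ≤ (R : ℝ) → Summable fun k => w k * s ^ k := by
    intro s hs hsR
    refine Summable.of_nonneg_of_le (fun k => mul_nonneg (hw k) (pow_nonneg hs k))
      (fun k => mul_le_mul_of_nonneg_left (pow_le_pow_left₀ hs hsR k) (hw k)) hRsum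
  have hwτ : Summable fun k => w k * τ ^ k := hwS τ hτpos.le hτR.le
  have hΦpos : ∀ s : ℝ, 0 ≤ s → Summable (fun k => w k * s ^ k) →
      0 < ∑' j : ℕ, w j * s ^ j := by
    intro s hs hsum
    have h0 : w 0 * s ^ 0 ≤ ∑' j : ℕ, w j * s ^ j :=
      Summable.le_tsum hsum 0 fun j _ => mul_nonneg (hw j) (pow_nonneg hs j)
    rw [pow_zero, mul_one] at h0
    linarith
  have hΦτpos : 0 < ∑' j : ℕ, w j * τ ^ j := hΦpos τ hτpos.le hwτ
  -- claim (b): s ≤ r * Φ s for all admissible s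
  have claim_b : ∀ s : ℝ, 0 ≤ s → Summable (fun k => w k * s ^ k) →
      s ≤ r * ∑' j : ℕ, w j * s ^ j := by
    intro s hs hsum
    have hΦs : 0 < ∑' j : ℕ, w j * s ^ j := hΦpos s hs hsum
    set t := s / (∑' j : ℕ, w j * s ^ j) with htdef
    have ht0 : 0 ≤ t := div_nonneg hs hΦs.le
    have htΦ : t * (∑' j : ℕ, w j * s ^ j) = s := div_mul_cancel₀ s hΦs.ne'
    have hbnd : ∀ N, ∑ n ∈ range N, PowerSeries.coeff n Z * t ^ n ≤ s := by
      intro N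
      induction N with
      | zero => simpa using hs
      | succ N ihN => exact (hstep t s ht0 hs hsum N ihN).trans_eq htΦ
    have hsumZ : Summable fun n => PowerSeries.coeff n Z * t ^ n :=
      summable_of_sum_range_le (fun n => mul_nonneg (hZnn n) (pow_nonneg ht0 n)) hbnd
    have h1 : ENNReal.ofReal t ≤ radiusOfCoeff fun m => PowerSeries.coeff m Z :=
      radius_ge_of_summable ht0 hsumZ
    have h2 : t ≤ r := by
      rw [← hrdef]
      exact (ENNReal.ofReal_le_iff_le_toReal hρZ_ne_top).mp h1
    calc s = t * (∑' j : ℕ, w j * s ^ j) := htΦ.symm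
      _ ≤ r * (∑' j : ℕ, w j * s ^ j) := mul_le_mul_of_nonneg_right h2 hΦs.le
  -- τ = r * Φ(τ)
  have tau_upper : τ ≤ r * ∑' j : ℕ, w j * τ ^ j := by
    nth_rewrite 1 [hτr]
    refine Summable.tsum_le_of_sum_range_le hZsum fun N => ?_
    cases N with
    | zero => simpa using mul_nonneg hr0 hΦτpos.le
    | succ N =>
      refine hstep r τ hr0 hτpos.le hwτ N ?_
      rw [hτr]
      exact Summable.sum_le_tsum (range N) (fun n _ => mul_nonneg (hZnn n) (pow_nonneg hr0 n)) hZsum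
  have tau_lower : r * (∑' j : ℕ, w j * τ ^ j) ≤ τ := by
    have key : ∀ K : ℕ, (∑ k ∈ range K, w k * τ ^ k) * r ≤ τ := by
      intro K
      have hshift : Summable fun n => PowerSeries.coeff (n+1) Z * r ^ (n+1) :=
        (summable_nat_add_iff 1).mpr hZsum
      have h00 : PowerSeries.coeff 0 Z * r ^ 0 = 0 := by
        rw [show PowerSeries.coeff 0 Z = 0 from by
          rw [← PowerSeries.coeff_zero_eq_constantCoeff] at hZ0; exact hZ0, zero_mul]
      have hτ' : τ = ∑' n : ℕ, PowerSeries.coeff (n+1) Z * r ^ (n+1) := by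
        rw [hτr, Summable.tsum_eq_zero_add hZsum, h00, zero_add]
      have hgk : ∀ k : ℕ, Summable (fun n => w k * PowerSeries.coeff n (Z^k) * r ^ (n+1)) ∧
          (∑' n : ℕ, w k * PowerSeries.coeff n (Z^k) * r ^ (n+1)) = w k * r * τ ^ k := by
        intro k
        have h1 : (fun n => w k * PowerSeries.coeff n (Z^k) * r ^ (n+1))
            = fun n => (w k * r) * (PowerSeries.coeff n (Z^k) * r ^ n) := by
          funext n; rw [pow_succ]; ring
        constructor
        · rw [h1]; exact (hck k).1.mul_left _
        · rw [h1, tsum_mul_left, (hck k).2]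
      have hgsum : Summable fun n => ∑ k ∈ range K, w k * PowerSeries.coeff n (Z^k) * r ^ (n+1) :=
        summable_sum fun k _ => (hgk k).1
      have hle : ∀ n : ℕ, ∑ k ∈ range K, w k * PowerSeries.coeff n (Z^k) * r ^ (n+1)
          ≤ PowerSeries.coeff (n+1) Z * r ^ (n+1) := by
        intro n
        rw [← Finset.sum_mul]
        refine mul_le_mul_of_nonneg_right ?_ (pow_nonneg hr0 _)
        rw [hZeq' n]
        have hsub1 : ∑ k ∈ range K, w k * PowerSeries.coeff n (Z^k)
            ≤ ∑ k ∈ range (max K (n+1)), w k * PowerSeries.coeff n (Z^k) :=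
          Finset.sum_le_sum_of_subset_of_nonneg
            (Finset.range_subset_range.mpr (le_max_left _ _))
            (fun k _ _ => mul_nonneg (hw k) (hc_nonneg k n))
        have hsub2 : ∑ k ∈ range (max K (n+1)), w k * PowerSeries.coeff n (Z^k)
            = ∑ k ∈ range (n+1), w k * PowerSeries.coeff n (Z^k) := by
          symm
          refine Finset.sum_subset (Finset.range_subset_range.mpr (le_max_right _ _)) ?_
          intro k hk hk'
          have : n < k := by
            simp only [Finset.mem_range] at hk hk' ⊢
            omega
          rw [hc_zero k n this, mul_zero]
        exact hsub1.trans_eq hsub2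
      have hmain := Summable.tsum_le_tsum hle hgsum hshift
      rw [Summable.tsum_finsetSum (fun k _ => (hgk k).1)] at hmain
      have : ∑ k ∈ range K, (∑' n : ℕ, w k * PowerSeries.coeff n (Z^k) * r ^ (n+1))
          = (∑ k ∈ range K, w k * τ ^ k) * r := by
        rw [Finset.sum_mul]
        exact Finset.sum_congr rfl fun k _ => by rw [(hgk k).2]; ring
      rw [this] at hmain
      exact hmain.trans_eq hτ'.symm
    have hΦle : (∑' j : ℕ, w j * τ ^ j) ≤ τ / r := by
      refine Summable.tsum_le_of_sum_range_le hwτ fun K => ?_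
      exact (le_div_iff₀ hrpos).mpr (key K)
    calc r * (∑' j : ℕ, w j * τ ^ j) ≤ r * (τ / r) :=
          mul_le_mul_of_nonneg_left hΦle hr0
      _ = τ := by field_simp
  have tau_eq : τ = r * ∑' j : ℕ, w j * τ ^ j := le_antisymm tau_upper tau_lower
  -- criticality via a local maximum argument
  have hDcrit : r * (∑' k : ℕ, w k * ((k : ℝ) * τ ^ (k - 1))) = 1 ∧
      Summable (fun k : ℕ => w k * ((k : ℝ) * τ ^ (k - 1))) := by
    obtain ⟨b, hbdef⟩ : ∃ b : ℝ, b = (τ + (R:ℝ)) / 2 := ⟨_, rfl⟩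
    have hτb : τ < b := by rw [hbdef]; linarith
    have hbR : b < (R:ℝ) := by rw [hbdef]; linarith
    have hb0 : 0 < b := lt_trans hτpos hτb
    obtain ⟨M, hM⟩ : ∃ M : ℝ, ∀ n, w n * (R:ℝ) ^ n ≤ M := by
      obtain ⟨M, hM⟩ := (hRsum.tendsto_atTop_zero).bddAbove_range
      exact ⟨M, fun n => hM (Set.mem_range_self n)⟩
    have hM0 : 0 < M := by
      have := hM 0
      rw [pow_zero, mul_one] at this
      linarith
    have hq0 : 0 ≤ b / (R:ℝ) := by positivity
    have hq1 : b / (R:ℝ) < 1 := (div_lt_one hRpos).mpr hbR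
    have hu : Summable (fun n : ℕ => (M / b) * ((n:ℝ) * (b / (R:ℝ)) ^ n)) := by
      have hgeo := summable_pow_mul_geometric_of_norm_lt_one (R := ℝ) 1
        (r := b / (R:ℝ)) (by rw [Real.norm_eq_abs, abs_of_nonneg hq0]; exact hq1)
      exact (hgeo.mul_left _).congr fun n => by rw [pow_one]
    have hder : ∀ (n : ℕ) (x : ℝ), x ∈ Set.Ioo (0:ℝ) b →
        HasDerivAt (fun y : ℝ => w n * y ^ n) (w n * ((n:ℝ) * x ^ (n-1))) x :=
      fun n x _ => (hasDerivAt_pow n x).const_mul (w n)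
    have hbnd : ∀ (n : ℕ) (x : ℝ), x ∈ Set.Ioo (0:ℝ) b →
        ‖w n * ((n:ℝ) * x ^ (n-1))‖ ≤ (M / b) * ((n:ℝ) * (b / (R:ℝ)) ^ n) := by
      intro n x hx
      obtain ⟨hx0, hxb⟩ := hx
      have hnn : 0 ≤ w n * ((n:ℝ) * x ^ (n-1)) := by
        have := hw n
        positivity
      rw [Real.norm_of_nonneg hnn]
      cases n with
      | zero => simp
      | succ m =>
        have hstep1 : x ^ (m+1-1) ≤ b ^ m := by
          simpa using pow_le_pow_left₀ hx0.le hxb.le m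
        have hwn : w (m+1) ≤ M / (R:ℝ) ^ (m+1) := by
          rw [le_div_iff₀ (pow_pos hRpos (m+1))]
          exact hM (m+1)
        calc w (m+1) * (((m+1:ℕ):ℝ) * x ^ (m+1-1))
            ≤ w (m+1) * (((m+1:ℕ):ℝ) * b ^ m) := by
              refine mul_le_mul_of_nonneg_left
                (mul_le_mul_of_nonneg_left hstep1 (by positivity)) (hw _)
          _ ≤ (M / (R:ℝ)^(m+1)) * (((m+1:ℕ):ℝ) * b ^ m) :=
              mul_le_mul_of_nonneg_right hwn (by positivity)
          _ = (M / b) * (((m+1:ℕ):ℝ) * (b / (R:ℝ)) ^ (m+1)) := by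
              rw [div_pow]
              field_simp
              ring
    have hτmem : τ ∈ Set.Ioo (0:ℝ) b := ⟨hτpos, hτb⟩
    have hΦder : HasDerivAt (fun y : ℝ => ∑' n : ℕ, w n * y ^ n)
        (∑' n : ℕ, w n * ((n:ℝ) * τ ^ (n-1))) τ :=
      hasDerivAt_tsum_of_isPreconnected hu isOpen_Ioo isPreconnected_Ioo
        hder hbnd hτmem hwτ hτmem
    have hDsum : Summable (fun k : ℕ => w k * ((k : ℝ) * τ ^ (k - 1))) :=
      Summable.of_norm_bounded hu (fun n => hbnd n τ hτmem)
    have hF : HasDerivAt (fun y : ℝ => y - r * ∑' n : ℕ, w n * y ^ n)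
        (1 - r * ∑' n : ℕ, w n * ((n:ℝ) * τ ^ (n-1))) τ :=
      (hasDerivAt_id τ).sub (hΦder.const_mul r)
    have hmax : IsLocalMax (fun y : ℝ => y - r * ∑' n : ℕ, w n * y ^ n) τ := by
      have hmem : Set.Ioo (0:ℝ) b ∈ nhds τ := isOpen_Ioo.mem_nhds hτmem
      refine Filter.eventually_of_mem hmem fun s hs => ?_
      have h1 : s ≤ r * ∑' n : ℕ, w n * s ^ n :=
        claim_b s hs.1.le (hwS s hs.1.le (le_trans hs.2.le hbR.le))
      have h2 : τ - r * (∑' n : ℕ, w n * τ ^ n) = 0 := sub_eq_zero.mpr tau_eq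
      show s - r * (∑' n : ℕ, w n * s ^ n) ≤ τ - r * ∑' n : ℕ, w n * τ ^ n
      linarith
    have hzero := hmax.hasDerivAt_eq_zero hF
    constructor
    · linarith [hzero]
    · exact hDsum
  obtain ⟨hD1, hDsum⟩ := hDcrit
  -- τ * D = Φ(τ)
  have htD : τ * (∑' k : ℕ, w k * ((k : ℝ) * τ ^ (k - 1))) = ∑' j : ℕ, w j * τ ^ j := by
    nth_rewrite 1 [tau_eq]
    calc (r * ∑' j : ℕ, w j * τ ^ j) * (∑' k : ℕ, w k * ((k : ℝ) * τ ^ (k - 1)))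
        = (∑' j : ℕ, w j * τ ^ j) * (r * ∑' k : ℕ, w k * ((k : ℝ) * τ ^ (k - 1))) := by ring
      _ = ∑' j : ℕ, w j * τ ^ j := by rw [hD1, mul_one]
  have hptwise : ∀ k : ℕ, (k : ℝ) * (w k * τ ^ k / ∑' j : ℕ, w j * τ ^ j)
      = (τ * (w k * ((k : ℝ) * τ ^ (k - 1)))) / ∑' j : ℕ, w j * τ ^ j := by
    intro k
    cases k with
    | zero => simp
    | succ m =>
      have h1 : τ ^ (m + 1) = τ ^ m * τ := pow_succ τ m
      have h2 : m + 1 - 1 = m := rfl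
      rw [h1, h2]
      push_cast
      ring
  have part4 : Summable (fun k : ℕ => (k : ℝ) * (w k * τ ^ k / ∑' j : ℕ, w j * τ ^ j)) :=
    (((hDsum.mul_left τ).div_const _).congr (fun k => (hptwise k).symm))
  have part5 : (∑' k : ℕ, (k : ℝ) * (w k * τ ^ k / ∑' j : ℕ, w j * τ ^ j)) = 1 := by
    rw [tsum_congr hptwise, tsum_div_const, tsum_mul_left, htD]
    exact div_self hΦτpos.ne'
  have part6 : τ * (∑' k : ℕ, (k : ℝ) * w k * τ ^ (k - 1)) = ∑' j : ℕ, w j * τ ^ j := by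
    rw [show (∑' k : ℕ, (k : ℝ) * w k * τ ^ (k - 1))
        = ∑' k : ℕ, w k * ((k : ℝ) * τ ^ (k - 1)) from tsum_congr fun k => by ring]
    exact htD
  refine ⟨?_, ?_, ?_, part4, part5, part6, ?_⟩
  · intro k
    exact div_nonneg (mul_nonneg (hw k) (pow_nonneg hτpos.le k)) hΦτpos.le
  · exact hwτ.div_const _
  · rw [tsum_div_const]
    exact div_self hΦτpos.ne'
  · refine ⟨(R : ℝ) / τ - 1, ?_, ?_⟩
    · have : 1 < (R : ℝ) / τ := (one_lt_div hτpos).mpr hτR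
      linarith
    · have hεe : (1 : ℝ) + ((R : ℝ) / τ - 1) = (R : ℝ) / τ := by ring
      have hpt : ∀ k : ℕ, w k * (R : ℝ) ^ k / (∑' j : ℕ, w j * τ ^ j)
          = (w k * τ ^ k / ∑' j : ℕ, w j * τ ^ j) * (1 + ((R : ℝ) / τ - 1)) ^ k := by
        intro k
        rw [hεe]
        have hτR' : τ * ((R : ℝ) / τ) = (R : ℝ) := by field_simp
        rw [show (w k * τ ^ k / ∑' j : ℕ, w j * τ ^ j) * ((R:ℝ) / τ) ^ k
            = w k * (τ ^ k * ((R:ℝ) / τ) ^ k) / ∑' j : ℕ, w j * τ ^ j from by ring,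
          ← mul_pow, hτR']
      exact ((hRsum.div_const _).congr hpt)
end

section
/- (Subcriticality yields a critical offspring distribution with exponential moments; Lemma 4.1 of the paper.) Suppose ρ_R > τ, where τ := Σ_{n≥1} A_n ρ_A^n. Then ρ_A ∈ (0, ∞), τ ∈ (0, ∞), R(τ) ∈ (0, ∞), ρ_A = τ / R(τ), and the sequence p_k := r_k τ^k / (R(τ) · k!) (k ∈ ℕ₀) is a probability distribution on ℕ₀ with mean one, i.e. Σ_{k≥0} k p_k = 1, and there exists ε > 0 such that Σ_{k≥0} p_k (1 + ε)^k < ∞. -/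
open scoped ENNReal

lemma coeff_pow_zero_of_lt {A : PowerSeries ℝ} (hA0 : PowerSeries.constantCoeff A = 0)
    {n k : ℕ} (h : n < k) : PowerSeries.coeff n (A ^ k) = 0 := by
  have hX : (PowerSeries.X : PowerSeries ℝ) ∣ A := PowerSeries.X_dvd_iff.mpr hA0
  have : (PowerSeries.X : PowerSeries ℝ) ^ k ∣ A ^ k := pow_dvd_pow_of_dvd hX k
  exact PowerSeries.X_pow_dvd_iff.mp this n h

lemma coeff_pow_nonneg_s7 {A : PowerSeries ℝ} (hAnn : ∀ n, 0 ≤ PowerSeries.coeff n A) :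
    ∀ k n, 0 ≤ PowerSeries.coeff n (A ^ k) := by
  intro k
  induction k with
  | zero =>
      intro n
      rw [pow_zero, PowerSeries.coeff_one]
      split <;> norm_num
  | succ k ih =>
      intro n
      rw [pow_succ, PowerSeries.coeff_mul]
      exact Finset.sum_nonneg fun p _ => mul_nonneg (ih p.1) (hAnn p.2)

lemma coeff_pow_congr {B C : PowerSeries ℝ} {N : ℕ}
    (h : ∀ i ≤ N, PowerSeries.coeff i B = PowerSeries.coeff i C) :
    ∀ k, ∀ n ≤ N, PowerSeries.coeff n (B ^ k) = PowerSeries.coeff n (C ^ k) := by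
  intro k
  induction k with
  | zero => intro n _; simp
  | succ k ih =>
      intro n hn
      rw [pow_succ, pow_succ, PowerSeries.coeff_mul, PowerSeries.coeff_mul]
      refine Finset.sum_congr rfl fun p hp => ?_
      rw [Finset.HasAntidiagonal.mem_antidiagonal] at hp
      have h1 : p.1 ≤ N := le_trans (by omega) hn
      have h2 : p.2 ≤ N := le_trans (by omega) hn
      rw [ih p.1 h1, h p.2 h2]

lemma poly_partial_le_eval {q : Polynomial ℝ} (hq : ∀ n, 0 ≤ q.coeff n) {x : ℝ} (hx : 0 ≤ x)
    (N : ℕ) : ∑ n ∈ Finset.range N, q.coeff n * x ^ n ≤ q.eval x := by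
  have hm : q.natDegree < max N (q.natDegree + 1) :=
    lt_of_lt_of_le (Nat.lt_succ_self _) (le_max_right _ _)
  rw [Polynomial.eval_eq_sum_range' hm]
  refine Finset.sum_le_sum_of_subset_of_nonneg (Finset.range_subset_range.mpr (le_max_left _ _)) ?_
  intro i _ _
  exact mul_nonneg (hq i) (pow_nonneg hx i)

lemma poly_eval_eq_partial {q : Polynomial ℝ} {N : ℕ} (h : ∀ i, N ≤ i → q.coeff i = 0) (x : ℝ) :
    q.eval x = ∑ n ∈ Finset.range N, q.coeff n * x ^ n := by
  have hm : q.natDegree < max N (q.natDegree + 1) :=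
    lt_of_lt_of_le (Nat.lt_succ_self _) (le_max_right _ _)
  rw [Polynomial.eval_eq_sum_range' hm]
  refine (Finset.sum_subset (Finset.range_subset_range.mpr (le_max_left _ _)) ?_).symm
  intro i _ hi
  rw [Finset.mem_range, not_lt] at hi
  rw [h i hi, zero_mul]

/-- Key combinatorial lemma: partial sums of coefficients of `A^k` at `x ≥ 0` are at most
the `k`-th power of the partial sums of `A`. -/
lemma partial_pow_le {A : PowerSeries ℝ} (hAnn : ∀ n, 0 ≤ PowerSeries.coeff n A)
    {x : ℝ} (hx : 0 ≤ x) (N k : ℕ) :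
    ∑ n ∈ Finset.range N, PowerSeries.coeff n (A ^ k) * x ^ n ≤
      (∑ n ∈ Finset.range N, PowerSeries.coeff n A * x ^ n) ^ k := by
  rcases Nat.eq_zero_or_pos N with hN | hN
  · subst hN
    simp only [Finset.range_zero, Finset.sum_empty]
    positivity
  set T : Polynomial ℝ := PowerSeries.trunc N A with hT
  have hcoeffT : ∀ i, PowerSeries.coeff i ((T : PowerSeries ℝ)) =
      if i < N then PowerSeries.coeff i A else 0 := by
    intro i
    rw [Polynomial.coeff_coe, hT, PowerSeries.coeff_trunc]
  have hagree : ∀ i ≤ N - 1, PowerSeries.coeff i A = PowerSeries.coeff i ((T : PowerSeries ℝ)) := by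
    intro i hi
    rw [hcoeffT, if_pos (by omega)]
  have hTnn : ∀ i, 0 ≤ PowerSeries.coeff i ((T : PowerSeries ℝ)) := by
    intro i
    rw [hcoeffT]
    split
    · exact hAnn i
    · exact le_refl 0
  have hTk : ∀ n, (T ^ k).coeff n = PowerSeries.coeff n ((T : PowerSeries ℝ) ^ k) := by
    intro n
    rw [← Polynomial.coe_pow, Polynomial.coeff_coe]
  have step1 : ∑ n ∈ Finset.range N, PowerSeries.coeff n (A ^ k) * x ^ n =
      ∑ n ∈ Finset.range N, (T ^ k).coeff n * x ^ n := by
    refine Finset.sum_congr rfl fun n hn => ?_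
    rw [Finset.mem_range] at hn
    rw [hTk, coeff_pow_congr hagree k n (by omega)]
  have step2 : ∑ n ∈ Finset.range N, (T ^ k).coeff n * x ^ n ≤ (T ^ k).eval x := by
    refine poly_partial_le_eval (fun n => ?_) hx N
    rw [hTk]
    exact coeff_pow_nonneg_s7 hTnn k n
  have step3 : (T ^ k).eval x = (T.eval x) ^ k := Polynomial.eval_pow _
  have step4 : T.eval x = ∑ n ∈ Finset.range N, PowerSeries.coeff n A * x ^ n := by
    rw [poly_eval_eq_partial (q := T) (N := N) (fun i hi => by
      have := hcoeffT i
      rw [Polynomial.coeff_coe] at this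
      rw [this, if_neg (by omega)]) x]
    refine Finset.sum_congr rfl fun n hn => ?_
    rw [Finset.mem_range] at hn
    have := hcoeffT n
    rw [Polynomial.coeff_coe] at this
    rw [this, if_pos hn]
  rw [step1, ← step4, ← step3]
  exact step2

lemma le_radius_of_summable (b : ℕ → ℝ) {x : ℝ} (hx : 0 ≤ x)
    (h : Summable fun n => b n * x ^ n) : ENNReal.ofReal x ≤ radiusOfCoeff b := by
  set xr : NNReal := ⟨x, hx⟩ with hxr
  have hco : (x : ℝ) = (xr : ℝ) := rfl
  have hsum : Summable fun n => b n * (xr : ℝ) ^ n := by rw [← hco]; exact h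
  have h1 : ENNReal.ofReal x = (xr : ℝ≥0∞) := by
    rw [ENNReal.ofReal, Real.toNNReal_of_nonneg hx]
    rfl
  rw [h1]
  exact le_iSup_of_le xr (le_iSup_of_le hsum le_rfl)

lemma summable_of_lt_radius_s7 (b : ℕ → ℝ) (hb : ∀ n, 0 ≤ b n) {x : ℝ} (hx : 0 ≤ x)
    (h : ENNReal.ofReal x < radiusOfCoeff b) : Summable fun n => b n * x ^ n := by
  rw [radiusOfCoeff, lt_iSup_iff] at h
  obtain ⟨s, hs⟩ := h
  by_cases hsum : Summable fun n => b n * (s : ℝ) ^ n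
  · rw [iSup_pos hsum] at hs
    have hxs : x ≤ (s : ℝ) := le_of_lt ((ENNReal.ofReal_lt_coe_iff hx).mp hs)
    refine Summable.of_nonneg_of_le (fun n => mul_nonneg (hb n) (pow_nonneg hx n)) (fun n => ?_) hsum
    exact mul_le_mul_of_nonneg_left (pow_le_pow_left₀ hx hxs n) (hb n)
  · rw [iSup_neg hsum] at hs
    exact absurd hs (by simp)

lemma radius_le_of_bound (b : ℕ → ℝ) {B : ℝ} (hB : 0 ≤ B)
    (h : ∀ x : NNReal, (Summable fun n => b n * (x : ℝ) ^ n) → (x : ℝ) ≤ B) :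
    radiusOfCoeff b ≤ ENNReal.ofReal B := by
  rw [radiusOfCoeff]
  refine iSup₂_le fun s hs => ?_
  have := h s hs
  calc (s : ℝ≥0∞) = ENNReal.ofReal (s : ℝ) := by simp [ENNReal.ofReal_coe_nnreal]
    _ ≤ ENNReal.ofReal B := ENNReal.ofReal_le_ofReal this

lemma exists_gt_summable (b : ℕ → ℝ) {t : ℝ} (ht : 0 ≤ t)
    (h : ENNReal.ofReal t < radiusOfCoeff b) :
    ∃ s : ℝ, t < s ∧ Summable fun n => b n * s ^ n := by
  rw [radiusOfCoeff, lt_iSup_iff] at h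
  obtain ⟨s, hs⟩ := h
  by_cases hsum : Summable fun n => b n * (s : ℝ) ^ n
  · rw [iSup_pos hsum] at hs
    exact ⟨(s : ℝ), (ENNReal.ofReal_lt_coe_iff ht).mp hs, hsum⟩
  · rw [iSup_neg hsum] at hs
    exact absurd hs (by simp)

/-- Cauchy-power identity: the power series of `A^k` evaluated as a sum. -/
lemma tsum_coeff_pow {A : PowerSeries ℝ} (hAnn : ∀ n, 0 ≤ PowerSeries.coeff n A)
    {x : ℝ} (hx : 0 ≤ x) (hsum : Summable fun n => PowerSeries.coeff n A * x ^ n) (k : ℕ) :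
    (Summable fun n => PowerSeries.coeff n (A ^ k) * x ^ n) ∧
      (∑' n, PowerSeries.coeff n (A ^ k) * x ^ n) =
        (∑' n, PowerSeries.coeff n A * x ^ n) ^ k := by
  induction k with
  | zero =>
      constructor
      · apply summable_of_ne_finset_zero (s := {0})
        intro n hn
        simp only [Finset.mem_singleton] at hn
        rw [pow_zero, PowerSeries.coeff_one, if_neg hn, zero_mul]
      · rw [pow_zero, pow_zero]
        rw [tsum_eq_single 0 (fun n hn => by
          rw [PowerSeries.coeff_one, if_neg hn, zero_mul])]
        simp
  | succ k ih =>
      obtain ⟨ihs, ihe⟩ := ih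
      set f : ℕ → ℝ := fun n => PowerSeries.coeff n (A ^ k) * x ^ n with hf
      set g : ℕ → ℝ := fun n => PowerSeries.coeff n A * x ^ n with hg
      have hfn : ∀ n, ‖f n‖ = f n := fun n =>
        Real.norm_of_nonneg (mul_nonneg (coeff_pow_nonneg_s7 hAnn k n) (pow_nonneg hx n))
      have hgn : ∀ n, ‖g n‖ = g n := fun n =>
        Real.norm_of_nonneg (mul_nonneg (hAnn n) (pow_nonneg hx n))
      have hfs : Summable fun n => ‖f n‖ := by simpa only [hfn] using ihs
      have hgs : Summable fun n => ‖g n‖ := by simpa only [hgn] using hsum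
      have key : ∀ n, PowerSeries.coeff n (A ^ (k + 1)) * x ^ n =
          ∑ kl ∈ Finset.HasAntidiagonal.antidiagonal n, f kl.1 * g kl.2 := by
        intro n
        rw [pow_succ, PowerSeries.coeff_mul, Finset.sum_mul]
        refine Finset.sum_congr rfl fun p hp => ?_
        rw [Finset.HasAntidiagonal.mem_antidiagonal] at hp
        simp only [hf, hg]
        rw [← hp, pow_add]
        ring
      constructor
      · refine Summable.of_norm ?_
        refine (summable_norm_sum_mul_antidiagonal_of_summable_norm hfs hgs).congr fun n => ?_
        rw [key n]
      · calc (∑' n, PowerSeries.coeff n (A ^ (k + 1)) * x ^ n)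
            = ∑' n, ∑ kl ∈ Finset.HasAntidiagonal.antidiagonal n, f kl.1 * g kl.2 := tsum_congr key
          _ = (∑' n, f n) * (∑' n, g n) :=
              (tsum_mul_tsum_eq_tsum_sum_antidiagonal_of_summable_norm hfs hgs).symm
          _ = (∑' n, PowerSeries.coeff n A * x ^ n) ^ (k + 1) := by
              rw [hf, hg, ihe, ← pow_succ]

/-- The functional equation `S(x) = x · R(S(x))` for any `x > 0` inside the radius. -/
lemma sum_funeq (r : ℕ → ℝ) (hr : ∀ k, 0 ≤ r k) (A : PowerSeries ℝ)
    (hA0 : PowerSeries.constantCoeff A = 0)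
    (hAeq : ∀ n : ℕ, PowerSeries.coeff (n + 1) A =
      ∑' k : ℕ, r k / (Nat.factorial k : ℝ) * PowerSeries.coeff n (A ^ k))
    (hAnn : ∀ n : ℕ, 0 ≤ PowerSeries.coeff n A)
    {x : ℝ} (hx : 0 < x) (hsum : Summable fun n => PowerSeries.coeff n A * x ^ n) :
    (Summable fun k : ℕ => r k / (Nat.factorial k : ℝ) *
        (∑' n, PowerSeries.coeff n A * x ^ n) ^ k) ∧
      (∑' n, PowerSeries.coeff n A * x ^ n) =
        x * ∑' k : ℕ, r k / (Nat.factorial k : ℝ) *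
          (∑' n, PowerSeries.coeff n A * x ^ n) ^ k := by
  set c : ℕ → ℝ := fun k => r k / (Nat.factorial k : ℝ) with hc
  have hcnn : ∀ k, 0 ≤ c k := fun k => div_nonneg (hr k) (Nat.cast_nonneg _)
  set S : ℝ := ∑' n, PowerSeries.coeff n A * x ^ n with hS
  set F : ℕ × ℕ → ℝ := fun p => x ^ (p.1 + 1) * (c p.2 * PowerSeries.coeff p.1 (A ^ p.2))
    with hF
  have hFnn : 0 ≤ F := fun p =>
    mul_nonneg (pow_nonneg hx.le _) (mul_nonneg (hcnn _) (coeff_pow_nonneg_s7 hAnn _ _))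
  have h1 : ∀ n, Summable fun k => F (n, k) := by
    intro n
    apply summable_of_ne_finset_zero (s := Finset.range (n + 1))
    intro k hk
    rw [Finset.mem_range, not_lt] at hk
    have : PowerSeries.coeff n (A ^ k) = 0 := coeff_pow_zero_of_lt hA0 (by omega)
    simp only [hF, this, mul_zero]
  have h2 : ∀ n, (∑' k, F (n, k)) = PowerSeries.coeff (n + 1) A * x ^ (n + 1) := by
    intro n
    simp only [hF]
    rw [tsum_mul_left, ← hAeq n, mul_comm]
  have h3 : Summable fun n => ∑' k, F (n, k) := by
    refine Summable.congr ?_ (fun n => (h2 n).symm)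
    exact ((summable_nat_add_iff (f := fun n => PowerSeries.coeff n A * x ^ n) 1).mpr hsum)
  have hFs : Summable F := (summable_prod_of_nonneg hFnn).mpr ⟨h1, h3⟩
  -- swapped
  have hFswap : Summable fun p : ℕ × ℕ => F p.swap := hFs.prod_symm
  have hFswapnn : (0 : ℕ × ℕ → ℝ) ≤ fun p => F p.swap := fun p => hFnn p.swap
  have hcols := ((summable_prod_of_nonneg hFswapnn).mp hFswap).2
  have hcol : ∀ k, (∑' n, F (n, k)) = x * (c k * S ^ k) := by
    intro k
    obtain ⟨Tk, TkEq⟩ := tsum_coeff_pow hAnn hx.le hsum k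
    have : (fun n => F (n, k)) = fun n =>
        (x * c k) * (PowerSeries.coeff n (A ^ k) * x ^ n) := by
      funext n
      simp only [hF]
      ring
    rw [this, tsum_mul_left, TkEq, ← hS]
    ring
  have hks : Summable fun k => x * (c k * S ^ k) := by
    refine Summable.congr hcols fun k => ?_
    exact hcol k
  have hsummand : Summable fun k => c k * S ^ k :=
    (summable_mul_left_iff hx.ne').mp hks
  refine ⟨hsummand, ?_⟩
  have ha0 : PowerSeries.coeff 0 A = 0 := by
    rw [PowerSeries.coeff_zero_eq_constantCoeff, hA0]
  have e1 : S = ∑' n, PowerSeries.coeff (n + 1) A * x ^ (n + 1) := by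
    rw [hS, Summable.tsum_eq_zero_add hsum, ha0, zero_mul, zero_add]
  have e2 : S = ∑' n, ∑' k, F (n, k) := by
    rw [e1]
    exact tsum_congr fun n => (h2 n).symm
  have e3 : (∑' n, ∑' k, F (n, k)) = ∑' k, ∑' n, F (n, k) := by
    exact (Summable.tsum_comm (f := fun n k => F (n, k)) hFs).symm
  calc S = ∑' k, ∑' n, F (n, k) := by rw [e2, e3]
    _ = ∑' k, x * (c k * S ^ k) := tsum_congr hcol
    _ = x * ∑' k, c k * S ^ k := tsum_mul_left

/-- Upper bound: if `x · R(s) ≤ s` then all partial sums of `A` at `x` are `≤ s`. -/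
lemma partial_sums_le (r : ℕ → ℝ) (hr : ∀ k, 0 ≤ r k) (A : PowerSeries ℝ)
    (hA0 : PowerSeries.constantCoeff A = 0)
    (hAeq : ∀ n : ℕ, PowerSeries.coeff (n + 1) A =
      ∑' k : ℕ, r k / (Nat.factorial k : ℝ) * PowerSeries.coeff n (A ^ k))
    (hAnn : ∀ n : ℕ, 0 ≤ PowerSeries.coeff n A)
    {s x : ℝ} (hs : 0 ≤ s) (hx : 0 ≤ x)
    (hRs : Summable fun k : ℕ => r k / (Nat.factorial k : ℝ) * s ^ k)
    (hxs : x * (∑' k : ℕ, r k / (Nat.factorial k : ℝ) * s ^ k) ≤ s) :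
    ∀ N, ∑ n ∈ Finset.range N, PowerSeries.coeff n A * x ^ n ≤ s := by
  set c : ℕ → ℝ := fun k => r k / (Nat.factorial k : ℝ) with hc
  have hcnn : ∀ k, 0 ≤ c k := fun k => div_nonneg (hr k) (Nat.cast_nonneg _)
  have hAfin : ∀ n : ℕ, PowerSeries.coeff (n + 1) A =
      ∑ k ∈ Finset.range (n + 1), c k * PowerSeries.coeff n (A ^ k) := by
    intro n
    rw [hAeq n]
    exact tsum_eq_sum (fun k hk => by
      rw [Finset.mem_range, not_lt] at hk
      rw [coeff_pow_zero_of_lt hA0 (by omega), mul_zero])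
  intro N
  induction N with
  | zero => simp [hs]
  | succ N ih =>
      have hp0 : 0 ≤ ∑ n ∈ Finset.range N, PowerSeries.coeff n A * x ^ n :=
        Finset.sum_nonneg fun n _ => mul_nonneg (hAnn n) (pow_nonneg hx n)
      rw [Finset.sum_range_succ']
      have ha0 : PowerSeries.coeff 0 A * x ^ 0 = 0 := by
        rw [PowerSeries.coeff_zero_eq_constantCoeff, hA0, zero_mul]
      rw [ha0, add_zero]
      have e1 : ∀ n ∈ Finset.range N, PowerSeries.coeff (n + 1) A * x ^ (n + 1) =
          ∑ k ∈ Finset.range N, c k * (PowerSeries.coeff n (A ^ k) * x ^ n) * x := by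
        intro n hn
        rw [Finset.mem_range] at hn
        rw [hAfin n, Finset.sum_mul]
        rw [Finset.sum_subset (Finset.range_subset_range.mpr (by omega : n + 1 ≤ N))
          (fun k _ hk => by
            rw [Finset.mem_range, not_lt] at hk
            rw [coeff_pow_zero_of_lt hA0 (by omega), mul_zero, zero_mul])]
        refine Finset.sum_congr rfl fun k _ => ?_
        rw [pow_succ]
        ring
      rw [Finset.sum_congr rfl e1, Finset.sum_comm]
      have e2 : ∀ k ∈ Finset.range N,
          ∑ n ∈ Finset.range N, c k * (PowerSeries.coeff n (A ^ k) * x ^ n) * x ≤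
            c k * s ^ k * x := by
        intro k _
        have h1 : ∑ n ∈ Finset.range N, c k * (PowerSeries.coeff n (A ^ k) * x ^ n) * x =
            c k * x * ∑ n ∈ Finset.range N, PowerSeries.coeff n (A ^ k) * x ^ n := by
          rw [Finset.mul_sum]
          exact Finset.sum_congr rfl fun n _ => by ring
        rw [h1]
        have h2 : ∑ n ∈ Finset.range N, PowerSeries.coeff n (A ^ k) * x ^ n ≤ s ^ k :=
          le_trans (partial_pow_le hAnn hx N k) (pow_le_pow_left₀ hp0 ih k)
        calc c k * x * ∑ n ∈ Finset.range N, PowerSeries.coeff n (A ^ k) * x ^ n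
            ≤ c k * x * s ^ k := by
              exact mul_le_mul_of_nonneg_left h2 (mul_nonneg (hcnn k) hx)
          _ = c k * s ^ k * x := by ring
      calc ∑ k ∈ Finset.range N, ∑ n ∈ Finset.range N,
              c k * (PowerSeries.coeff n (A ^ k) * x ^ n) * x
          ≤ ∑ k ∈ Finset.range N, c k * s ^ k * x := Finset.sum_le_sum e2
        _ = (∑ k ∈ Finset.range N, c k * s ^ k) * x := by rw [Finset.sum_mul]
        _ ≤ (∑' k, c k * s ^ k) * x := by
            refine mul_le_mul_of_nonneg_right ?_ hx
            exact Summable.sum_le_tsum _ (fun k _ => mul_nonneg (hcnn k) (pow_nonneg hs k)) hRs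
        _ = x * ∑' k, c k * s ^ k := by ring
        _ ≤ s := hxs

/-- Differentiability of a nonnegative power series strictly inside a summable point. -/
lemma hasDerivAt_tsum_pow (c : ℕ → ℝ) (hc : ∀ k, 0 ≤ c k) {τ b : ℝ}
    (hτ : 0 ≤ τ) (hτb : τ < b) (hb : Summable fun k => c k * b ^ k) :
    (Summable fun k : ℕ => c k * ((k : ℝ) * τ ^ (k - 1))) ∧
      HasDerivAt (fun s : ℝ => ∑' k, c k * s ^ k)
        (∑' k : ℕ, c k * ((k : ℝ) * τ ^ (k - 1))) τ := by
  have hbpos : 0 < b := lt_of_le_of_lt hτ hτb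
  set b' : ℝ := (τ + b) / 2 with hb'
  have hb'pos : 0 < b' := by rw [hb']; linarith
  have hτb' : τ < b' := by rw [hb']; linarith
  have hb'b : b' < b := by rw [hb']; linarith
  set q : ℝ := b' / b with hq
  have hq0 : 0 < q := div_pos hb'pos hbpos
  have hq1 : q < 1 := (div_lt_one hbpos).mpr hb'b
  have hgeo : Summable fun k : ℕ => (k : ℝ) ^ 1 * q ^ k :=
    summable_pow_mul_geometric_of_norm_lt_one 1 (by
      rw [Real.norm_of_nonneg hq0.le]; exact hq1)
  set C : ℝ := ∑' k : ℕ, (k : ℝ) ^ 1 * q ^ k with hC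
  have hCk : ∀ k : ℕ, (k : ℝ) * q ^ k ≤ C := by
    intro k
    calc (k : ℝ) * q ^ k = (k : ℝ) ^ 1 * q ^ k := by ring
      _ ≤ C := Summable.le_tsum hgeo k (fun j _ => by positivity)
  set u : ℕ → ℝ := fun k => c k * ((k : ℝ) * b' ^ (k - 1)) with hu
  have hub : ∀ k, u k ≤ (C / b') * (c k * b ^ k) := by
    intro k
    have h1 : (k : ℝ) * b' ^ k ≤ C * b ^ k := by
      have h2 := hCk k
      rw [hq, div_pow] at h2
      have h3 : (k : ℝ) * (b' ^ k / b ^ k) = ((k : ℝ) * b' ^ k) / b ^ k := by ring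
      rw [h3, div_le_iff₀ (pow_pos hbpos k)] at h2
      exact h2
    have h4 : (k : ℝ) * b' ^ (k - 1) ≤ C / b' * b ^ k := by
      rcases Nat.eq_zero_or_pos k with hk | hk
      · subst hk
        simp only [Nat.cast_zero, zero_mul]
        have hC0 : 0 ≤ C := tsum_nonneg (fun j => by positivity)
        exact mul_nonneg (div_nonneg hC0 hb'pos.le) (by positivity)
      · have e : (k : ℝ) * b' ^ (k - 1) = ((k : ℝ) * b' ^ k) / b' := by
          rw [show b' ^ k = b' ^ (k - 1) * b' by
            conv_lhs => rw [show k = (k - 1) + 1 by omega]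
            rw [pow_succ]]
          field_simp
        rw [e]
        calc ((k : ℝ) * b' ^ k) / b' ≤ (C * b ^ k) / b' := by gcongr
          _ = C / b' * b ^ k := by ring
    calc u k = c k * ((k : ℝ) * b' ^ (k - 1)) := rfl
      _ ≤ c k * (C / b' * b ^ k) := mul_le_mul_of_nonneg_left h4 (hc k)
      _ = (C / b') * (c k * b ^ k) := by ring
  have hunn : ∀ k, 0 ≤ u k := fun k => by
    have : (0:ℝ) ≤ (k : ℝ) * b' ^ (k - 1) := by positivity
    exact mul_nonneg (hc k) this
  have husum : Summable u :=
    Summable.of_nonneg_of_le hunn hub ((hb.mul_left (C / b')))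
  have hIoo : τ ∈ Set.Ioo (-b') b' := ⟨by linarith, hτb'⟩
  have hf0 : Summable fun k => c k * τ ^ k := by
    refine Summable.of_nonneg_of_le (fun k => mul_nonneg (hc k) (pow_nonneg hτ k))
      (fun k => mul_le_mul_of_nonneg_left (pow_le_pow_left₀ hτ hτb.le k) (hc k)) hb
  have hderiv : ∀ k : ℕ, ∀ y ∈ Set.Ioo (-b') b',
      HasDerivAt (fun s : ℝ => c k * s ^ k) (c k * ((k : ℝ) * y ^ (k - 1))) y := by
    intro k y _
    exact (hasDerivAt_pow k y).const_mul (c k)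
  have hbound : ∀ k : ℕ, ∀ y ∈ Set.Ioo (-b') b',
      ‖c k * ((k : ℝ) * y ^ (k - 1))‖ ≤ u k := by
    intro k y hy
    rw [Real.norm_eq_abs, abs_mul, abs_of_nonneg (hc k), abs_mul,
      Nat.abs_cast, abs_pow]
    refine mul_le_mul_of_nonneg_left (mul_le_mul_of_nonneg_left ?_ (Nat.cast_nonneg k)) (hc k)
    refine pow_le_pow_left₀ (abs_nonneg y) ?_ _
    rw [abs_le]
    exact ⟨hy.1.le, hy.2.le⟩
  have hsumd : Summable fun k : ℕ => c k * ((k : ℝ) * τ ^ (k - 1)) := by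
    refine Summable.of_norm ?_
    refine Summable.of_nonneg_of_le (fun k => norm_nonneg _) (fun k => hbound k τ hIoo) husum
  refine ⟨hsumd, ?_⟩
  exact hasDerivAt_tsum_of_isPreconnected husum isOpen_Ioo (isPreconnected_Ioo)
    hderiv hbound hIoo hf0 hIoo

/-- **Subcriticality yields a critical offspring distribution with exponential moments.**
Let `(r k)` be nonnegative reals with `r 0 > 0` and `r k > 0` for some `k ≥ 2`, set
`R(x) = ∑ (r k / k!) x^k` with radius of convergence `ρ_R ∈ (0,∞]`, and let `A` be the
nonnegative formal power series with zero constant term satisfying `A = x·R(A)`, with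
radius of convergence `ρ_A` and `τ := ∑ A_n ρ_A^n`.  If `ρ_R > τ`, then
`ρ_A ∈ (0,∞)`, `τ ∈ (0,∞)`, `R(τ) ∈ (0,∞)`, `ρ_A = τ / R(τ)`, and
`p k := r k τ^k / (R(τ)·k!)` is a probability distribution on ℕ with mean one and with
`∑ p k (1+ε)^k < ∞` for some `ε > 0`. -/
theorem subcritical_enriched_trees_offspring_distribution
    (r : ℕ → ℝ) (hr : ∀ k, 0 ≤ r k) (hr0 : 0 < r 0) (hr2 : ∃ k, 2 ≤ k ∧ 0 < r k)
    (hρR : 0 < radiusOfCoeff (fun k => r k / (Nat.factorial k : ℝ)))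
    (A : PowerSeries ℝ) (hA0 : PowerSeries.constantCoeff A = 0)
    (hAeq : ∀ n : ℕ, PowerSeries.coeff (n + 1) A =
      ∑' k : ℕ, r k / (Nat.factorial k : ℝ) * PowerSeries.coeff n (A ^ k))
    (hAnn : ∀ n : ℕ, 0 ≤ PowerSeries.coeff n A)
    (τ : ℝ)
    (hτdef : τ = ∑' n : ℕ, PowerSeries.coeff n A *
      (radiusOfCoeff fun m => PowerSeries.coeff m A).toReal ^ n)
    (hsub : ENNReal.ofReal τ < radiusOfCoeff (fun k => r k / (Nat.factorial k : ℝ))) :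
    0 < radiusOfCoeff (fun m => PowerSeries.coeff m A) ∧
    radiusOfCoeff (fun m => PowerSeries.coeff m A) < ⊤ ∧
    Summable (fun n : ℕ => PowerSeries.coeff n A *
      (radiusOfCoeff fun m => PowerSeries.coeff m A).toReal ^ n) ∧
    0 < τ ∧
    Summable (fun k : ℕ => r k / (Nat.factorial k : ℝ) * τ ^ k) ∧
    0 < (∑' k : ℕ, r k / (Nat.factorial k : ℝ) * τ ^ k) ∧
    (radiusOfCoeff fun m => PowerSeries.coeff m A).toReal =
      τ / (∑' k : ℕ, r k / (Nat.factorial k : ℝ) * τ ^ k) ∧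
    (∀ k : ℕ, 0 ≤ r k * τ ^ k /
      ((∑' j : ℕ, r j / (Nat.factorial j : ℝ) * τ ^ j) * (Nat.factorial k : ℝ))) ∧
    Summable (fun k : ℕ => r k * τ ^ k /
      ((∑' j : ℕ, r j / (Nat.factorial j : ℝ) * τ ^ j) * (Nat.factorial k : ℝ))) ∧
    (∑' k : ℕ, r k * τ ^ k /
      ((∑' j : ℕ, r j / (Nat.factorial j : ℝ) * τ ^ j) * (Nat.factorial k : ℝ))) = 1 ∧
    Summable (fun k : ℕ => (k : ℝ) * (r k * τ ^ k /
      ((∑' j : ℕ, r j / (Nat.factorial j : ℝ) * τ ^ j) * (Nat.factorial k : ℝ)))) ∧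
    (∑' k : ℕ, (k : ℝ) * (r k * τ ^ k /
      ((∑' j : ℕ, r j / (Nat.factorial j : ℝ) * τ ^ j) * (Nat.factorial k : ℝ)))) = 1 ∧
    ∃ ε : ℝ, 0 < ε ∧
      Summable (fun k : ℕ => (r k * τ ^ k /
        ((∑' j : ℕ, r j / (Nat.factorial j : ℝ) * τ ^ j) * (Nat.factorial k : ℝ))) *
          (1 + ε) ^ k) := by
  obtain ⟨j, hj2, hrj⟩ := hr2
  have hfacpos : ∀ k : ℕ, (0:ℝ) < (Nat.factorial k : ℝ) := fun k => by
    exact_mod_cast Nat.factorial_pos k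
  have hcnn : ∀ k : ℕ, 0 ≤ r k / (Nat.factorial k : ℝ) := fun k =>
    div_nonneg (hr k) (hfacpos k).le
  have hc0 : (0:ℝ) < r 0 / (Nat.factorial 0 : ℝ) := by
    simpa [Nat.factorial] using hr0
  have hcj : (0:ℝ) < r j / (Nat.factorial j : ℝ) := div_pos hrj (hfacpos j)
  -- `ρ` and `xs`
  set ρ : ℝ≥0∞ := radiusOfCoeff (fun m => PowerSeries.coeff m A) with hρdef
  -- Part A : ρ > 0
  have hρpos : 0 < ρ := by
    obtain ⟨s0, hs0pos, hs0sum⟩ := exists_gt_summable _ le_rfl (by simpa using hρR)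
    set Rs0 : ℝ := ∑' k : ℕ, r k / (Nat.factorial k : ℝ) * s0 ^ k with hRs0
    have hRs0pos : 0 < Rs0 := by
      have h1 : r 0 / (Nat.factorial 0 : ℝ) * s0 ^ 0 ≤ Rs0 :=
        Summable.le_tsum hs0sum 0 (fun k _ => mul_nonneg (hcnn k) (pow_nonneg hs0pos.le k))
      have h2 : r 0 / (Nat.factorial 0 : ℝ) * s0 ^ 0 = r 0 := by
        simp [Nat.factorial]
      linarith
    set x0 : ℝ := s0 / Rs0 with hx0
    have hx0pos : 0 < x0 := div_pos hs0pos hRs0pos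
    have hxs : x0 * Rs0 ≤ s0 := by
      rw [hx0, div_mul_cancel₀ _ hRs0pos.ne']
    have hple := partial_sums_le r hr A hA0 hAeq hAnn hs0pos.le hx0pos.le hs0sum hxs
    have hsumx0 : Summable fun n => PowerSeries.coeff n A * x0 ^ n :=
      summable_of_sum_range_le
        (fun n => mul_nonneg (hAnn n) (pow_nonneg hx0pos.le n)) hple
    calc (0:ℝ≥0∞) < ENNReal.ofReal x0 := ENNReal.ofReal_pos.mpr hx0pos
      _ ≤ ρ := le_radius_of_summable _ hx0pos.le hsumx0
  -- Part B : ρ < ⊤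
  have hbound_glob : ∀ x : ℝ, 0 < x →
      (Summable fun n => PowerSeries.coeff n A * x ^ n) →
      (r j / (Nat.factorial j : ℝ)) * x *
        (∑' n, PowerSeries.coeff n A * x ^ n) ^ (j-1) ≤ 1 ∧
      x * (r 0 / (Nat.factorial 0 : ℝ)) ≤ (∑' n, PowerSeries.coeff n A * x ^ n) := by
    intro x hx hsx
    obtain ⟨hsmd, heq⟩ := sum_funeq r hr A hA0 hAeq hAnn hx hsx
    set S : ℝ := ∑' n, PowerSeries.coeff n A * x ^ n with hS
    have hSnn : 0 ≤ S :=
      tsum_nonneg fun n => mul_nonneg (hAnn n) (pow_nonneg hx.le n)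
    have hterm : ∀ k, 0 ≤ r k / (Nat.factorial k : ℝ) * S ^ k := fun k =>
      mul_nonneg (hcnn k) (pow_nonneg hSnn k)
    have hT0 : r 0 / (Nat.factorial 0 : ℝ) * S ^ 0 ≤
        ∑' k : ℕ, r k / (Nat.factorial k : ℝ) * S ^ k :=
      Summable.le_tsum hsmd 0 (fun k _ => hterm k)
    have hTj : r j / (Nat.factorial j : ℝ) * S ^ j ≤
        ∑' k : ℕ, r k / (Nat.factorial k : ℝ) * S ^ k :=
      Summable.le_tsum hsmd j (fun k _ => hterm k)
    have h0 : x * (r 0 / (Nat.factorial 0 : ℝ)) ≤ S := by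
      have := mul_le_mul_of_nonneg_left hT0 hx.le
      rw [← heq] at this
      simpa using this
    have hSpos : 0 < S := lt_of_lt_of_le (by positivity) h0
    have hj' : x * (r j / (Nat.factorial j : ℝ) * S ^ j) ≤ S := by
      have := mul_le_mul_of_nonneg_left hTj hx.le
      rw [← heq] at this
      exact this
    constructor
    · have hSj : S ^ j = S ^ (j - 1) * S := by
        conv_lhs => rw [show j = (j - 1) + 1 by omega]
        rw [pow_succ]
      rw [hSj] at hj'
      have h2 : (r j / (Nat.factorial j : ℝ) * x * S ^ (j-1)) * S ≤ 1 * S := by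
        rw [one_mul]
        calc (r j / (Nat.factorial j : ℝ) * x * S ^ (j-1)) * S
            = x * (r j / (Nat.factorial j : ℝ) * (S ^ (j - 1) * S)) := by ring
          _ ≤ S := hj'
      exact le_of_mul_le_mul_right h2 hSpos
    · exact h0
  have hρtop : ρ < ⊤ := by
    set K : ℝ := 1 / (r j / (Nat.factorial j : ℝ) * (r 0 / (Nat.factorial 0 : ℝ)) ^ (j-1))
      with hK
    have hKpos : 0 < K := by positivity
    have hB : ρ ≤ ENNReal.ofReal (max 1 K) := by
      refine radius_le_of_bound _ (le_trans zero_le_one (le_max_left _ _)) ?_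
      intro x hx
      rcases eq_or_lt_of_le x.coe_nonneg with h0 | hxpos
      · rw [← h0]; exact le_trans zero_le_one (le_max_left _ _)
      obtain ⟨h1, h2⟩ := hbound_glob x hxpos hx
      set S : ℝ := ∑' n, PowerSeries.coeff n A * (x:ℝ) ^ n with hS
      have hxc0 : (0:ℝ) < (x:ℝ) * (r 0 / (Nat.factorial 0 : ℝ)) := by positivity
      have h3 : ((x:ℝ) * (r 0 / (Nat.factorial 0 : ℝ))) ^ (j-1) ≤ S ^ (j-1) :=
        pow_le_pow_left₀ hxc0.le h2 _
      have h4 : r j / (Nat.factorial j : ℝ) * (x:ℝ) *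
          ((x:ℝ) * (r 0 / (Nat.factorial 0 : ℝ))) ^ (j-1) ≤ 1 :=
        le_trans (mul_le_mul_of_nonneg_left h3 (by positivity)) h1
      have h5 : (r j / (Nat.factorial j : ℝ) * (r 0 / (Nat.factorial 0 : ℝ)) ^ (j-1)) *
          (x:ℝ) ^ j ≤ 1 := by
        calc (r j / (Nat.factorial j : ℝ) * (r 0 / (Nat.factorial 0 : ℝ)) ^ (j-1)) * (x:ℝ) ^ j
            = r j / (Nat.factorial j : ℝ) * (x:ℝ) *
              ((x:ℝ) * (r 0 / (Nat.factorial 0 : ℝ))) ^ (j-1) := by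
              rw [mul_pow]
              rw [show (x:ℝ) ^ j = (x:ℝ) * (x:ℝ) ^ (j-1) by
                conv_lhs => rw [show j = (j - 1) + 1 by omega]
                rw [pow_succ]; ring]
              ring
          _ ≤ 1 := h4
      have h6 : (x:ℝ) ^ j ≤ K := by
        rw [hK, le_div_iff₀ (by positivity)]
        linarith [h5]
      rcases le_or_gt (x:ℝ) 1 with h7 | h7
      · exact le_trans h7 (le_max_left _ _)
      · refine le_trans (le_trans ?_ h6) (le_max_right _ _)
        exact le_self_pow₀ h7.le (by omega)
    exact lt_of_le_of_lt hB (ENNReal.ofReal_lt_top)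
  -- xs
  set xs : ℝ := ρ.toReal with hxsdef
  have hxspos : 0 < xs := ENNReal.toReal_pos hρpos.ne' hρtop.ne
  have hsum_lt : ∀ x : ℝ, 0 ≤ x → x < xs →
      Summable fun n => PowerSeries.coeff n A * x ^ n := by
    intro x hx hlt
    refine summable_of_lt_radius_s7 _ hAnn hx ?_
    have hgoal : ENNReal.ofReal x < ρ := by
      calc ENNReal.ofReal x < ENNReal.ofReal xs := (ENNReal.ofReal_lt_ofReal_iff hxspos).mpr hlt
        _ = ρ := by rw [hxsdef, ENNReal.ofReal_toReal hρtop.ne]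
    exact hgoal
  -- Part C : summable at xs
  have hM : ∃ M : ℝ, ∀ x : ℝ, 0 ≤ x → x < xs →
      (∑' n, PowerSeries.coeff n A * x ^ n) ≤ M := by
    refine ⟨max 1 (1 / (xs / 2 * (r j / (Nat.factorial j : ℝ)))), ?_⟩
    have key : ∀ x : ℝ, xs / 2 ≤ x → x < xs →
        (∑' n, PowerSeries.coeff n A * x ^ n) ≤
          max 1 (1 / (xs / 2 * (r j / (Nat.factorial j : ℝ)))) := by
      intro x hxl hxu
      have hxpos : 0 < x := lt_of_lt_of_le (by linarith) hxl
      obtain ⟨h1, h2⟩ := hbound_glob x hxpos (hsum_lt x hxpos.le hxu)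
      set S : ℝ := ∑' n, PowerSeries.coeff n A * x ^ n with hS
      rcases le_or_gt S 1 with h3 | h3
      · exact le_trans h3 (le_max_left _ _)
      · have h4 : S ≤ S ^ (j-1) := le_self_pow₀ h3.le (by omega)
        have h5 : r j / (Nat.factorial j : ℝ) * x * S ≤ 1 :=
          le_trans (mul_le_mul_of_nonneg_left h4 (by positivity)) h1
        have h6 : S ≤ 1 / (x * (r j / (Nat.factorial j : ℝ))) := by
          rw [le_div_iff₀ (by positivity)]
          calc S * (x * (r j / (Nat.factorial j : ℝ)))
              = r j / (Nat.factorial j : ℝ) * x * S := by ring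
            _ ≤ 1 := h5
        refine le_trans (le_trans h6 ?_) (le_max_right _ _)
        apply one_div_le_one_div_of_le (by positivity)
        exact mul_le_mul_of_nonneg_right hxl (hcnn j)
    intro x hx hxu
    have hy1 : xs / 2 ≤ max x (xs / 2) := le_max_right _ _
    have hy2 : max x (xs / 2) < xs := max_lt hxu (by linarith)
    have hy0 : 0 ≤ max x (xs / 2) := le_trans hx (le_max_left _ _)
    refine le_trans ?_ (key _ hy1 hy2)
    refine Summable.tsum_le_tsum (fun n => ?_) (hsum_lt x hx hxu) (hsum_lt _ hy0 hy2)
    exact mul_le_mul_of_nonneg_left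
      (pow_le_pow_left₀ hx (le_max_left _ _) n) (hAnn n)
  obtain ⟨M, hMb⟩ := hM
  have hpartial : ∀ N, ∑ n ∈ Finset.range N, PowerSeries.coeff n A * xs ^ n ≤ M := by
    intro N
    have hcont : ContinuousAt (fun x : ℝ => ∑ n ∈ Finset.range N,
        PowerSeries.coeff n A * x ^ n) xs := by
      apply Continuous.continuousAt
      exact continuous_finset_sum _ fun i _ => continuous_const.mul (continuous_pow i)
    have htend : Filter.Tendsto (fun x : ℝ => ∑ n ∈ Finset.range N,
        PowerSeries.coeff n A * x ^ n) (nhdsWithin xs (Set.Iio xs))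
        (nhds (∑ n ∈ Finset.range N, PowerSeries.coeff n A * xs ^ n)) :=
      hcont.continuousWithinAt.tendsto
    refine le_of_tendsto htend ?_
    filter_upwards [Ioo_mem_nhdsLT_of_mem (show xs ∈ Set.Ioc (0:ℝ) xs from ⟨hxspos, le_rfl⟩)]
      with x hx
    have hx0 : 0 ≤ x := le_of_lt hx.1
    refine le_trans (Summable.sum_le_tsum _ (fun n _ => mul_nonneg (hAnn n) (pow_nonneg hx0 n))
      (hsum_lt x hx0 hx.2)) (hMb x hx0 hx.2)
  have hsumxs : Summable fun n => PowerSeries.coeff n A * xs ^ n :=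
    summable_of_sum_range_le
      (fun n => mul_nonneg (hAnn n) (pow_nonneg hxspos.le n)) hpartial
  -- Part D : functional equation at xs
  obtain ⟨hRτsum, hτeq⟩ := sum_funeq r hr A hA0 hAeq hAnn hxspos hsumxs
  rw [← hτdef] at hRτsum hτeq
  set Rτ : ℝ := ∑' k : ℕ, r k / (Nat.factorial k : ℝ) * τ ^ k with hRτdef
  have hτnn : 0 ≤ τ := by
    rw [hτdef]
    exact tsum_nonneg fun n => mul_nonneg (hAnn n) (pow_nonneg hxspos.le n)
  have hRτpos : 0 < Rτ := by
    have h1 : r 0 / (Nat.factorial 0 : ℝ) * τ ^ 0 ≤ Rτ :=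
      Summable.le_tsum hRτsum 0 (fun k _ => mul_nonneg (hcnn k) (pow_nonneg hτnn k))
    have h2 : r 0 / (Nat.factorial 0 : ℝ) * τ ^ 0 = r 0 := by simp [Nat.factorial]
    linarith
  have hτpos : 0 < τ := by
    rw [hτeq]
    exact mul_pos hxspos hRτpos
  have hxseq : xs = τ / Rτ := by
    rw [hτeq]
    field_simp
  -- Part E : criticality
  obtain ⟨b, hτb, hbsum⟩ := exists_gt_summable _ hτnn hsub
  have hbpos : 0 < b := lt_of_le_of_lt hτnn hτb
  obtain ⟨hDsum, hDeriv⟩ :=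
    hasDerivAt_tsum_pow (fun k => r k / (Nat.factorial k : ℝ)) hcnn hτnn hτb hbsum
  set D : ℝ := ∑' k : ℕ, r k / (Nat.factorial k : ℝ) * ((k:ℝ) * τ ^ (k - 1)) with hDdef
  have hψle : ∀ s : ℝ, 0 < s → s < b →
      s / (∑' k : ℕ, r k / (Nat.factorial k : ℝ) * s ^ k) ≤ xs := by
    intro s hspos hsb
    have hssum : Summable fun k : ℕ => r k / (Nat.factorial k : ℝ) * s ^ k := by
      refine Summable.of_nonneg_of_le (fun k => mul_nonneg (hcnn k) (pow_nonneg hspos.le k))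
        (fun k => mul_le_mul_of_nonneg_left (pow_le_pow_left₀ hspos.le hsb.le k) (hcnn k))
        hbsum
    set Rs : ℝ := ∑' k : ℕ, r k / (Nat.factorial k : ℝ) * s ^ k with hRsdef
    have hRspos : 0 < Rs := by
      have h1 : r 0 / (Nat.factorial 0 : ℝ) * s ^ 0 ≤ Rs :=
        Summable.le_tsum hssum 0 (fun k _ => mul_nonneg (hcnn k) (pow_nonneg hspos.le k))
      have h2 : r 0 / (Nat.factorial 0 : ℝ) * s ^ 0 = r 0 := by simp [Nat.factorial]
      linarith
    have hxeq : s / Rs * Rs ≤ s := by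
      rw [div_mul_cancel₀ _ hRspos.ne']
    have hple := partial_sums_le r hr A hA0 hAeq hAnn hspos.le
      (div_pos hspos hRspos).le hssum hxeq
    have hsumx : Summable fun n => PowerSeries.coeff n A * (s / Rs) ^ n :=
      summable_of_sum_range_le
        (fun n => mul_nonneg (hAnn n) (pow_nonneg (div_pos hspos hRspos).le n)) hple
    have hle : ENNReal.ofReal (s / Rs) ≤ ρ :=
      le_radius_of_summable _ (div_pos hspos hRspos).le hsumx
    rw [← ENNReal.ofReal_toReal hρtop.ne, ← hxsdef] at hle
    exact (ENNReal.ofReal_le_ofReal_iff hxspos.le).mp hle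
  have hψderiv : HasDerivAt (fun s : ℝ =>
      s / (∑' k : ℕ, r k / (Nat.factorial k : ℝ) * s ^ k))
      ((1 * Rτ - τ * D) / Rτ ^ 2) τ := by
    have hne : (∑' k : ℕ, r k / (Nat.factorial k : ℝ) * τ ^ k) ≠ 0 := by
      rw [← hRτdef]; exact hRτpos.ne'
    have := (hasDerivAt_id' (x := τ)).div hDeriv hne
    exact this
  have hmax : IsLocalMax (fun s : ℝ =>
      s / (∑' k : ℕ, r k / (Nat.factorial k : ℝ) * s ^ k)) τ := by
    filter_upwards [Ioo_mem_nhds hτpos hτb] with s hs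
    have h1 := hψle s hs.1 hs.2
    have h2 : τ / (∑' k : ℕ, r k / (Nat.factorial k : ℝ) * τ ^ k) = xs := by
      rw [← hRτdef, ← hxseq]
    rw [h2]
    exact h1
  have hcrit0 : (1 * Rτ - τ * D) / Rτ ^ 2 = 0 := hmax.hasDerivAt_eq_zero hψderiv
  have hcrit : Rτ = τ * D := by
    rcases div_eq_zero_iff.mp hcrit0 with h | h
    · linarith
    · exact absurd h (pow_ne_zero 2 hRτpos.ne')
  -- Part F : conclusions
  have hpk : ∀ k : ℕ, r k * τ ^ k / (Rτ * (Nat.factorial k : ℝ)) =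
      (r k / (Nat.factorial k : ℝ) * τ ^ k) / Rτ := by
    intro k
    rw [div_mul_eq_mul_div, div_div, mul_comm ((Nat.factorial k : ℝ)) Rτ]
  have hqk : ∀ k : ℕ, (k:ℝ) * (r k * τ ^ k / (Rτ * (Nat.factorial k : ℝ))) =
      (r k / (Nat.factorial k : ℝ) * ((k:ℝ) * τ ^ (k - 1)) * τ) / Rτ := by
    intro k
    cases k with
    | zero => simp
    | succ m =>
        have hfac : ((Nat.factorial (m+1) : ℝ)) ≠ 0 := (hfacpos (m+1)).ne'
        have hτm : τ ^ (m + 1 - 1) * τ = τ ^ (m+1) := by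
          rw [Nat.add_sub_cancel, pow_succ]
        rw [Nat.add_sub_cancel]
        field_simp
        ring
  have hεid : ∀ k : ℕ, (r k * τ ^ k / (Rτ * (Nat.factorial k : ℝ))) * (1 + (b/τ - 1)) ^ k =
      (r k / (Nat.factorial k : ℝ) * b ^ k) / Rτ := by
    intro k
    have h1 : 1 + (b/τ - 1) = b / τ := by ring
    have h2 : τ ^ k * (b / τ) ^ k = b ^ k := by
      rw [← mul_pow, mul_div_cancel₀ _ hτpos.ne']
    rw [h1, hpk k, div_mul_eq_mul_div]
    congr 1
    rw [mul_assoc, h2]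
  refine ⟨hρpos, hρtop, hsumxs, hτpos, hRτsum, hRτpos, hxseq, ?_, ?_, ?_, ?_, ?_, ?_⟩
  · intro k
    exact div_nonneg (mul_nonneg (hr k) (pow_nonneg hτnn k))
      (mul_nonneg hRτpos.le (hfacpos k).le)
  · exact (hRτsum.div_const Rτ).congr fun k => (hpk k).symm
  · calc (∑' k : ℕ, r k * τ ^ k / (Rτ * (Nat.factorial k : ℝ)))
        = ∑' k : ℕ, (r k / (Nat.factorial k : ℝ) * τ ^ k) / Rτ := tsum_congr hpk
      _ = Rτ / Rτ := by rw [tsum_div_const, ← hRτdef]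
      _ = 1 := div_self hRτpos.ne'
  · exact ((hDsum.mul_right τ).div_const Rτ).congr fun k => (hqk k).symm
  · calc (∑' k : ℕ, (k:ℝ) * (r k * τ ^ k / (Rτ * (Nat.factorial k : ℝ))))
        = ∑' k : ℕ, (r k / (Nat.factorial k : ℝ) * ((k:ℝ) * τ ^ (k - 1)) * τ) / Rτ :=
          tsum_congr hqk
      _ = (D * τ) / Rτ := by rw [tsum_div_const, tsum_mul_right, ← hDdef]
      _ = 1 := by rw [mul_comm D τ, ← hcrit]; exact div_self hRτpos.ne'
  · refine ⟨b / τ - 1, by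
      rw [sub_pos, lt_div_iff₀ hτpos]
      linarith, ?_⟩
    exact (hbsum.div_const Rτ).congr fun k => (hεid k).symm
end

section
/- (Criticality of the induced offspring distribution for trees conditioned on degrees in Ω.) Let ζ be a random nonnegative integer with E[ζ] = 1, P(ζ = 0) > 0, and let Ω ⊊ ℕ₀ satisfy 0 ∈ Ω and P(ζ ∈ Ω) > 0; write Ω^c := ℕ₀ \ Ω. Set f(z) := Σ_{k ∈ Ω} P(ζ = k) z^k and h(z) := Σ_{k ∈ Ω^c} P(ζ = k) z^{k−1}. Then h(1) = 1 − P(ζ ∈ Ω) < 1, the power series G(z) := f(z) / (1 − h(z)) has nonnegative coefficients, G(1) = 1 (so its coefficients form a probability distribution on ℕ₀), and G′(1) = 1 (the distribution has mean one). -/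
open Finset

private lemma conv_partial_sum (q h : ℕ → ℝ) (N : ℕ) :
    ∑ n ∈ range N, ∑ i ∈ range (n + 1), q i * h (n - i)
      = ∑ i ∈ range N, q i * ∑ j ∈ range (N - i), h j := by
  induction N with
  | zero => simp
  | succ N ih =>
    rw [sum_range_succ, ih, sum_range_succ (fun i => q i * ∑ j ∈ range (N + 1 - i), h j)]
    have h1 : N + 1 - N = 1 := by omega
    rw [h1, Finset.sum_range_one]
    have h2 : ∀ i ∈ range N, q i * ∑ j ∈ range (N + 1 - i), h j
        = q i * ∑ j ∈ range (N - i), h j + q i * h (N - i) := by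
      intro i hi
      have hi' : i < N := mem_range.mp hi
      have h3 : N + 1 - i = (N - i) + 1 := by omega
      rw [h3, sum_range_succ, mul_add]
    rw [sum_congr rfl h2, Finset.sum_add_distrib,
      sum_range_succ (fun i => q i * h (N - i)), Nat.sub_self]
    ring

set_option maxHeartbeats 1000000 in
/-- **Criticality of the induced offspring distribution for trees conditioned on
degrees in `Ω`.**  Let `ζ` have law `(p k)` on ℕ with mean one and `p 0 > 0`, and let
`Ω ⊊ ℕ` with `0 ∈ Ω` and `P(ζ ∈ Ω) > 0`.  With `f(z) = ∑_{k∈Ω} p k z^k`,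
`h(z) = ∑_{k∈Ωᶜ} p k z^{k−1}` and `G = f/(1 − h)` (as a formal power series), one has:
`h(1) = 1 − P(ζ ∈ Ω) < 1`, the coefficients `q k` of `G` are nonnegative, `G(1) = 1`
(so `(q k)` is a probability distribution on ℕ), and `G′(1) = 1` (mean one). -/
theorem induced_offspring_distribution_critical
    (p : ℕ → ℝ) (hp : ∀ k, 0 ≤ p k) (hsum : Summable p) (htotal : (∑' k : ℕ, p k) = 1)
    (hp0 : 0 < p 0)
    (hmean_sum : Summable fun k : ℕ => (k : ℝ) * p k)
    (hmean : (∑' k : ℕ, (k : ℝ) * p k) = 1)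
    (Ω : Set ℕ) [DecidablePred (· ∈ Ω)] (hΩne : Ω ≠ Set.univ) (h0Ω : 0 ∈ Ω)
    (hPΩ : 0 < ∑' k : ℕ, if k ∈ Ω then p k else 0)
    (F H G : PowerSeries ℝ)
    (hF : F = PowerSeries.mk fun k => if k ∈ Ω then p k else 0)
    (hH : H = PowerSeries.mk fun j => if j + 1 ∈ Ω then (0 : ℝ) else p (j + 1))
    (hG : G = F * (1 - H)⁻¹) :
    (∑' j : ℕ, if j + 1 ∈ Ω then (0 : ℝ) else p (j + 1)) =
        1 - (∑' k : ℕ, if k ∈ Ω then p k else 0) ∧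
    (∑' j : ℕ, if j + 1 ∈ Ω then (0 : ℝ) else p (j + 1)) < 1 ∧
    (∀ k : ℕ, 0 ≤ PowerSeries.coeff k G) ∧
    Summable (fun k : ℕ => PowerSeries.coeff k G) ∧
    (∑' k : ℕ, PowerSeries.coeff k G) = 1 ∧
    Summable (fun k : ℕ => (k : ℝ) * PowerSeries.coeff k G) ∧
    (∑' k : ℕ, (k : ℝ) * PowerSeries.coeff k G) = 1 := by
  classical
  set f : ℕ → ℝ := fun k => if k ∈ Ω then p k else 0 with hfdef
  set h : ℕ → ℝ := fun j => if j + 1 ∈ Ω then (0 : ℝ) else p (j + 1) with hhdef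
  set g : ℕ → ℝ := fun k => if k ∈ Ω then (0 : ℝ) else p k with hgdef
  set q : ℕ → ℝ := fun k => PowerSeries.coeff k G with hqdef
  -- basic facts about f, g, h
  have hf0 : ∀ k, 0 ≤ f k := by
    intro k; by_cases hk : k ∈ Ω <;> simp [hfdef, hk, hp k]
  have hg0 : ∀ k, 0 ≤ g k := by
    intro k; by_cases hk : k ∈ Ω <;> simp [hgdef, hk, hp k]
  have hfle : ∀ k, f k ≤ p k := by
    intro k; by_cases hk : k ∈ Ω <;> simp [hfdef, hk, hp k]
  have hgle : ∀ k, g k ≤ p k := by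
    intro k; by_cases hk : k ∈ Ω <;> simp [hgdef, hk, hp k]
  have hsf : Summable f := hsum.of_nonneg_of_le hf0 hfle
  have hsg : Summable g := hsum.of_nonneg_of_le hg0 hgle
  have hfg : ∀ k, f k + g k = p k := by
    intro k; by_cases hk : k ∈ Ω <;> simp [hfdef, hgdef, hk]
  have hgh : ∀ j, h j = g (j + 1) := by intro j; simp [hhdef, hgdef]
  have hsh : Summable h := by
    have : Summable fun j => g (j + 1) := (summable_nat_add_iff 1).2 hsg
    exact this.congr fun j => (hgh j).symm
  have hh0 : ∀ j, 0 ≤ h j := fun j => (hgh j) ▸ hg0 (j + 1)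
  set a := ∑' k, f k with hadef
  set b := ∑' j, h j with hbdef
  have hapos : 0 < a := hPΩ
  have hag : a + ∑' k, g k = 1 := by
    rw [← Summable.tsum_add hsf hsg, ← htotal]
    exact tsum_congr hfg
  have hgtsum : ∑' k, g k = b := by
    rw [Summable.tsum_eq_zero_add hsg]
    have : g 0 = 0 := by simp [hgdef, h0Ω]
    have hcong : (∑' j : ℕ, g (j + 1)) = b := tsum_congr fun j => (hgh j).symm
    rw [this, zero_add, hcong]
  have hb : b = 1 - a := by linarith [hag, hgtsum]
  have hblt : b < 1 := by linarith
  refine ⟨hb, hblt, ?_⟩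
  -- the coefficient recursion
  have hh0b : h 0 ≤ b := Summable.le_tsum hsh 0 fun j _ => hh0 j
  have hc : (0:ℝ) < 1 - h 0 := by linarith
  have hHc : PowerSeries.constantCoeff H = h 0 := by
    rw [hH]; exact PowerSeries.constantCoeff_mk
  have hunit : PowerSeries.constantCoeff (1 - H) ≠ 0 := by
    rw [map_sub, map_one, hHc]; linarith
  have hGH : G * (1 - H) = F := by
    rw [hG, mul_assoc, PowerSeries.inv_mul_cancel _ hunit, mul_one]
  have hHco : ∀ n, PowerSeries.coeff n H = h n := by
    intro n; rw [hH]; exact PowerSeries.coeff_mk n _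
  have hrec : ∀ n, q n = f n + ∑ i ∈ range (n + 1), q i * h (n - i) := by
    intro n
    have hcoeff := congrArg (PowerSeries.coeff n) hGH
    rw [mul_sub, mul_one, map_sub, PowerSeries.coeff_mul, hF, PowerSeries.coeff_mk,
      Finset.Nat.sum_antidiagonal_eq_sum_range_succ_mk] at hcoeff
    simp only [hHco] at hcoeff
    have : q n - ∑ i ∈ range (n + 1), q i * h (n - i) = f n := hcoeff
    linarith
  have hrec2 : ∀ n, q n * (1 - h 0) = f n + ∑ i ∈ range n, q i * h (n - i) := by
    intro n
    have := hrec n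
    rw [sum_range_succ, Nat.sub_self] at this
    linear_combination this
  -- nonnegativity of q
  have hq0 : ∀ n, 0 ≤ q n := by
    intro n
    induction n using Nat.strong_induction_on with
    | _ n ih =>
      have hs : 0 ≤ ∑ i ∈ range n, q i * h (n - i) :=
        sum_nonneg fun i hi => mul_nonneg (ih i (mem_range.mp hi)) (hh0 _)
      have h2 := hrec2 n
      nlinarith [hf0 n]
  refine ⟨hq0, ?_⟩
  -- partial sums of q are bounded by 1
  have hSsplit : ∀ N, ∑ n ∈ range N, q n
      = ∑ n ∈ range N, f n + ∑ i ∈ range N, q i * ∑ j ∈ range (N - i), h j := by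
    intro N
    rw [← conv_partial_sum, ← Finset.sum_add_distrib]
    exact Finset.sum_congr rfl fun n _ => hrec n
  have hS : ∀ N, ∑ n ∈ range N, q n ≤ 1 := by
    intro N
    have h1 := hSsplit N
    have h2 : ∑ i ∈ range N, q i * ∑ j ∈ range (N - i), h j
        ≤ (∑ i ∈ range N, q i) * b := by
      rw [Finset.sum_mul]
      exact Finset.sum_le_sum fun i _ =>
        mul_le_mul_of_nonneg_left (Summable.sum_le_tsum _ (fun j _ => hh0 j) hsh) (hq0 i)
    have h3 : ∑ n ∈ range N, f n ≤ a := Summable.sum_le_tsum _ (fun k _ => hf0 k) hsf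
    nlinarith
  have hsq : Summable q := summable_of_sum_range_le hq0 hS
  refine ⟨hsq, ?_⟩
  -- Cauchy product machinery
  have hnq : Summable fun n => ‖q n‖ :=
    hsq.congr fun n => (Real.norm_of_nonneg (hq0 n)).symm
  have hnh : Summable fun n => ‖h n‖ :=
    hsh.congr fun n => (Real.norm_of_nonneg (hh0 n)).symm
  have hconv_eq : ∀ n, (∑ kl ∈ antidiagonal n, q kl.1 * h kl.2)
      = ∑ i ∈ range (n + 1), q i * h (n - i) := by
    intro n; exact Finset.Nat.sum_antidiagonal_eq_sum_range_succ_mk _ n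
  have hsC : Summable fun n => ∑ i ∈ range (n + 1), q i * h (n - i) := by
    have := (summable_norm_sum_mul_antidiagonal_of_summable_norm hnq hnh).of_norm
    exact this.congr hconv_eq
  have hQb : (∑' n, q n) * b = ∑' n, ∑ i ∈ range (n + 1), q i * h (n - i) := by
    rw [tsum_mul_tsum_eq_tsum_sum_antidiagonal_of_summable_norm hnq hnh]
    exact tsum_congr hconv_eq
  have hQ1 : (∑' n, q n) = 1 := by
    have hQ : (∑' n, q n) = a + (∑' n, q n) * b := by
      calc (∑' n, q n) = ∑' n, (f n + ∑ i ∈ range (n + 1), q i * h (n - i)) :=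
            tsum_congr hrec
        _ = a + ∑' n, ∑ i ∈ range (n + 1), q i * h (n - i) := Summable.tsum_add hsf hsC
        _ = a + (∑' n, q n) * b := by rw [hQb]
    have : (∑' n, q n) * a = 1 * a := by rw [hb] at hQ; ring_nf; ring_nf at hQ; linarith
    exact mul_right_cancel₀ (ne_of_gt hapos) this
  refine ⟨hQ1, ?_⟩
  -- mean part
  set f' : ℕ → ℝ := fun k : ℕ => (k : ℝ) * f k with hf'def
  set h' : ℕ → ℝ := fun j : ℕ => (j : ℝ) * h j with hh'def
  set q' : ℕ → ℝ := fun k : ℕ => (k : ℝ) * q k with hq'def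
  have hf'0 : ∀ k, 0 ≤ f' k := fun k => mul_nonneg (Nat.cast_nonneg k) (hf0 k)
  have hh'0 : ∀ j, 0 ≤ h' j := fun j => mul_nonneg (Nat.cast_nonneg j) (hh0 j)
  have hq'0 : ∀ k, 0 ≤ q' k := fun k => mul_nonneg (Nat.cast_nonneg k) (hq0 k)
  have hsf' : Summable f' := hmean_sum.of_nonneg_of_le hf'0
    (fun k => mul_le_mul_of_nonneg_left (hfle k) (Nat.cast_nonneg k))
  have hsh' : Summable h' := by
    have h1 : Summable fun j => ((j + 1 : ℕ) : ℝ) * p (j + 1) :=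
      (summable_nat_add_iff 1).2 hmean_sum
    refine h1.of_nonneg_of_le hh'0 fun j => ?_
    have : h j ≤ p (j + 1) := by
      by_cases hk : j + 1 ∈ Ω <;> simp [hhdef, hk, hp (j + 1)]
    have h2 : (j : ℝ) * h j ≤ (j : ℝ) * p (j + 1) :=
      mul_le_mul_of_nonneg_left this (Nat.cast_nonneg j)
    have h3 : (j : ℝ) * p (j + 1) ≤ ((j + 1 : ℕ) : ℝ) * p (j + 1) := by
      have := hp (j + 1); push_cast; nlinarith
    exact le_trans h2 h3
  set A := ∑' k, f' k with hAdef
  set B := ∑' j, h' j with hBdef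
  have hA0 : 0 ≤ A := tsum_nonneg hf'0
  have hB0 : 0 ≤ B := tsum_nonneg hh'0
  -- A + B = a
  have hAB : A + B = a := by
    have hg' : Summable fun k : ℕ => (k : ℝ) * g k := hmean_sum.of_nonneg_of_le
      (fun k => mul_nonneg (Nat.cast_nonneg k) (hg0 k))
      (fun k => mul_le_mul_of_nonneg_left (hgle k) (Nat.cast_nonneg k))
    have hsplit : A + ∑' k : ℕ, (k : ℝ) * g k = 1 := by
      rw [← Summable.tsum_add hsf' hg', ← hmean]
      exact tsum_congr fun k => by rw [hf'def]; simp only; rw [← mul_add, hfg k]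
    have hgshift : (∑' k : ℕ, (k : ℝ) * g k) = B + b := by
      rw [Summable.tsum_eq_zero_add hg']
      simp only [Nat.cast_zero, zero_mul, zero_add]
      have : ∀ j : ℕ, ((j + 1 : ℕ) : ℝ) * g (j + 1) = h' j + h j := by
        intro j
        rw [hh'def]
        simp only
        rw [← hgh j]
        push_cast
        ring
      rw [tsum_congr this, Summable.tsum_add hsh' hsh]
    rw [hgshift] at hsplit
    linarith [hb]
  -- the weighted recursion
  have hrec' : ∀ n, q' n = f' n + (∑ i ∈ range (n + 1), q' i * h (n - i))
      + ∑ i ∈ range (n + 1), q i * h' (n - i) := by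
    intro n
    have h1 : q' n = f' n + ∑ i ∈ range (n + 1), ((n : ℝ) * (q i * h (n - i))) := by
      rw [hq'def, hf'def]
      simp only
      rw [hrec n, mul_add, Finset.mul_sum]
    rw [h1]
    have h2 : ∀ i ∈ range (n + 1), (n : ℝ) * (q i * h (n - i))
        = q' i * h (n - i) + q i * h' (n - i) := by
      intro i hi
      have hi' : i ≤ n := Nat.lt_succ_iff.mp (Finset.mem_range.mp hi)
      have hn : (n : ℝ) = (i : ℝ) + ((n - i : ℕ) : ℝ) := by
        rw [Nat.cast_sub hi']; ring
      rw [hn, hq'def, hh'def]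
      simp only
      ring
    rw [Finset.sum_congr rfl h2, Finset.sum_add_distrib]
    ring
  -- partial sums of q' are bounded
  have hT : ∀ N, ∑ n ∈ range N, q' n ≤ (A + B) / a := by
    intro N
    have h1 : ∑ n ∈ range N, q' n = ∑ n ∈ range N, f' n
        + ∑ i ∈ range N, q' i * ∑ j ∈ range (N - i), h j
        + ∑ i ∈ range N, q i * ∑ j ∈ range (N - i), h' j := by
      rw [← conv_partial_sum q' h, ← conv_partial_sum q h', ← Finset.sum_add_distrib,
        ← Finset.sum_add_distrib]
      exact Finset.sum_congr rfl fun n _ => hrec' n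
    have h2 : ∑ i ∈ range N, q' i * ∑ j ∈ range (N - i), h j
        ≤ (∑ i ∈ range N, q' i) * b := by
      rw [Finset.sum_mul]
      exact Finset.sum_le_sum fun i _ =>
        mul_le_mul_of_nonneg_left (Summable.sum_le_tsum _ (fun j _ => hh0 j) hsh) (hq'0 i)
    have h3 : ∑ i ∈ range N, q i * ∑ j ∈ range (N - i), h' j
        ≤ (∑ i ∈ range N, q i) * B := by
      rw [Finset.sum_mul]
      exact Finset.sum_le_sum fun i _ =>
        mul_le_mul_of_nonneg_left (Summable.sum_le_tsum _ (fun j _ => hh'0 j) hsh') (hq0 i)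
    have h4 : ∑ n ∈ range N, f' n ≤ A := Summable.sum_le_tsum _ (fun k _ => hf'0 k) hsf'
    have h5 : ∑ n ∈ range N, q n ≤ 1 := hS N
    have h6 : (0:ℝ) ≤ ∑ n ∈ range N, q n := sum_nonneg fun i _ => hq0 i
    have hbB : 0 ≤ B := hB0
    -- T ≤ A + T * b + B ; b = 1 - a
    have h8 : (∑ n ∈ range N, q n) * B ≤ B := mul_le_of_le_one_left hB0 h5
    rw [hb] at h2
    have h7 : (∑ n ∈ range N, q' n) * a ≤ A + B := by linarith
    exact (le_div_iff₀ hapos).mpr h7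
  have hsq' : Summable q' := summable_of_sum_range_le hq'0 hT
  refine ⟨hsq', ?_⟩
  -- Cauchy products for the mean
  have hnq' : Summable fun n => ‖q' n‖ :=
    hsq'.congr fun n => (Real.norm_of_nonneg (hq'0 n)).symm
  have hnh' : Summable fun n => ‖h' n‖ :=
    hsh'.congr fun n => (Real.norm_of_nonneg (hh'0 n)).symm
  have hconv1 : ∀ n, (∑ kl ∈ antidiagonal n, q' kl.1 * h kl.2)
      = ∑ i ∈ range (n + 1), q' i * h (n - i) := fun n =>
    Finset.Nat.sum_antidiagonal_eq_sum_range_succ_mk _ n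
  have hconv2 : ∀ n, (∑ kl ∈ antidiagonal n, q kl.1 * h' kl.2)
      = ∑ i ∈ range (n + 1), q i * h' (n - i) := fun n =>
    Finset.Nat.sum_antidiagonal_eq_sum_range_succ_mk _ n
  have hsC1 : Summable fun n => ∑ i ∈ range (n + 1), q' i * h (n - i) :=
    ((summable_norm_sum_mul_antidiagonal_of_summable_norm hnq' hnh).of_norm).congr hconv1
  have hsC2 : Summable fun n => ∑ i ∈ range (n + 1), q i * h' (n - i) :=
    ((summable_norm_sum_mul_antidiagonal_of_summable_norm hnq hnh').of_norm).congr hconv2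
  have hM1 : (∑' n, q' n) * b = ∑' n, ∑ i ∈ range (n + 1), q' i * h (n - i) := by
    rw [tsum_mul_tsum_eq_tsum_sum_antidiagonal_of_summable_norm hnq' hnh]
    exact tsum_congr hconv1
  have hM2 : (∑' n, q n) * B = ∑' n, ∑ i ∈ range (n + 1), q i * h' (n - i) := by
    rw [tsum_mul_tsum_eq_tsum_sum_antidiagonal_of_summable_norm hnq hnh']
    exact tsum_congr hconv2
  have hM : (∑' n, q' n) = A + (∑' n, q' n) * b + 1 * B := by
    calc (∑' n, q' n)
        = ∑' n, (f' n + (∑ i ∈ range (n + 1), q' i * h (n - i))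
            + ∑ i ∈ range (n + 1), q i * h' (n - i)) := tsum_congr hrec'
      _ = (∑' n, (f' n + ∑ i ∈ range (n + 1), q' i * h (n - i)))
            + ∑' n, ∑ i ∈ range (n + 1), q i * h' (n - i) := Summable.tsum_add (hsf'.add hsC1) hsC2
      _ = A + (∑' n, ∑ i ∈ range (n + 1), q' i * h (n - i))
            + ∑' n, ∑ i ∈ range (n + 1), q i * h' (n - i) := by rw [Summable.tsum_add hsf' hsC1]
      _ = A + (∑' n, q' n) * b + 1 * B := by rw [← hM1, ← hM2, hQ1]
  have hfin : (∑' n, q' n) * a = 1 * a := by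
    rw [hb] at hM
    nlinarith [hM, hAB]
  exact mul_right_cancel₀ (ne_of_gt hapos) hfin
end

section
/- (Exponential moments of the induced offspring distribution.) Let ζ be a random nonnegative integer with E[ζ] = 1, P(ζ = 0) > 0, and let Ω ⊊ ℕ₀ satisfy 0 ∈ Ω and P(ζ ∈ Ω) > 0; write Ω^c := ℕ₀ \ Ω. Set f(z) := Σ_{k ∈ Ω} P(ζ = k) z^k and h(z) := Σ_{k ∈ Ω^c} P(ζ = k) z^{k−1}, and let (q_k)_{k≥0} be the coefficient sequence of G(z) := f(z)/(1 − h(z)). If E[(1 + δ)^ζ] < ∞ for some δ > 0, then the radius of convergence of G is strictly greater than 1; in particular there exists ε > 0 with Σ_{k≥0} q_k (1 + ε)^k < ∞. -/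
open scoped ENNReal

open Finset

lemma aux_triangle (a b : ℕ → ℝ) (ha : ∀ i, 0 ≤ a i) (hb : ∀ j, 0 ≤ b j) (N : ℕ) :
    ∑ n ∈ Finset.range N, ∑ kl ∈ Finset.HasAntidiagonal.antidiagonal n, a kl.1 * b kl.2
      ≤ (∑ i ∈ Finset.range N, a i) * (∑ j ∈ Finset.range N, b j) := by
  rw [Finset.sum_mul_sum]
  have hdisj : (↑(Finset.range N : Finset ℕ) : Set ℕ).PairwiseDisjoint
      (fun n => (Finset.HasAntidiagonal.antidiagonal n : Finset (ℕ × ℕ))) := by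
    intro m _ n _ hmn
    simp only [Finset.disjoint_left, Finset.HasAntidiagonal.mem_antidiagonal]
    intro kl h1 h2
    exact hmn (h1.symm.trans h2)
  rw [← Finset.sum_biUnion hdisj]
  have hsub : (Finset.range N).biUnion (fun n => Finset.HasAntidiagonal.antidiagonal n)
      ⊆ Finset.range N ×ˢ Finset.range N := by
    intro kl hkl
    simp only [Finset.mem_biUnion, Finset.mem_range, Finset.HasAntidiagonal.mem_antidiagonal] at hkl
    obtain ⟨n, hn, hsum⟩ := hkl
    simp only [Finset.mem_product, Finset.mem_range]
    omega
  calc ∑ kl ∈ (Finset.range N).biUnion (fun n => Finset.HasAntidiagonal.antidiagonal n), a kl.1 * b kl.2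
      ≤ ∑ kl ∈ Finset.range N ×ˢ Finset.range N, a kl.1 * b kl.2 :=
        Finset.sum_le_sum_of_subset_of_nonneg hsub
          (fun kl _ _ => mul_nonneg (ha kl.1) (hb kl.2))
    _ = ∑ i ∈ Finset.range N, ∑ j ∈ Finset.range N, a i * b j := by
        rw [Finset.sum_product]

set_option maxHeartbeats 2000000 in
/-- **Exponential moments of the induced offspring distribution.**
Let `ζ` have law `(p k)` on ℕ with mean one and `p 0 > 0`, and let `Ω ⊊ ℕ` with
`0 ∈ Ω` and `P(ζ ∈ Ω) > 0`.  Let `(q k)` be the coefficients of the formal power series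
`G = f/(1 − h)`, where `f(z) = ∑_{k∈Ω} p k z^k` and `h(z) = ∑_{k∈Ωᶜ} p k z^{k−1}`.
If `E[(1+δ)^ζ] < ∞` for some `δ > 0`, then the radius of convergence of `G` is strictly
greater than `1`; in particular there is `ε > 0` with `∑ q k (1+ε)^k < ∞`. -/
theorem induced_offspring_distribution_exponential_moments
    (p : ℕ → ℝ) (hp : ∀ k, 0 ≤ p k) (hsum : Summable p) (htotal : (∑' k : ℕ, p k) = 1)
    (hp0 : 0 < p 0)
    (hmean_sum : Summable fun k : ℕ => (k : ℝ) * p k)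
    (hmean : (∑' k : ℕ, (k : ℝ) * p k) = 1)
    (Ω : Set ℕ) [DecidablePred (· ∈ Ω)] (hΩne : Ω ≠ Set.univ) (h0Ω : 0 ∈ Ω)
    (hPΩ : 0 < ∑' k : ℕ, if k ∈ Ω then p k else 0)
    (F H G : PowerSeries ℝ)
    (hF : F = PowerSeries.mk fun k => if k ∈ Ω then p k else 0)
    (hH : H = PowerSeries.mk fun j => if j + 1 ∈ Ω then (0 : ℝ) else p (j + 1))
    (hG : G = F * (1 - H)⁻¹)
    (hδ : ∃ δ : ℝ, 0 < δ ∧ Summable fun k : ℕ => p k * (1 + δ) ^ k) :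
    1 < radiusOfCoeff (fun k => PowerSeries.coeff k G) ∧
    ∃ ε : ℝ, 0 < ε ∧
      Summable (fun k : ℕ => PowerSeries.coeff k G * (1 + ε) ^ k) := by
  classical
  obtain ⟨δ, hδpos, hδsum⟩ := hδ
  set fc : ℕ → ℝ := fun k => if k ∈ Ω then p k else 0 with hfc
  set hc : ℕ → ℝ := fun j => if j + 1 ∈ Ω then (0 : ℝ) else p (j + 1) with hhc
  have hfc_nonneg : ∀ k, 0 ≤ fc k := fun k => by
    simp only [hfc]; split_ifs; exacts [hp k, le_rfl]
  have hhc_nonneg : ∀ j, 0 ≤ hc j := fun j => by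
    simp only [hhc]; split_ifs; exacts [le_rfl, hp _]
  have hfc_le : ∀ k, fc k ≤ p k := fun k => by
    simp only [hfc]; split_ifs; exacts [le_rfl, hp k]
  have hhc_le : ∀ j, hc j ≤ p (j + 1) := fun j => by
    simp only [hhc]; split_ifs; exacts [hp _, le_rfl]
  -- basic positivity of 1 + δ and 1 ≤ 1 + δ
  have hδ1 : (1 : ℝ) ≤ 1 + δ := by linarith
  have hδ0 : (0 : ℝ) < 1 + δ := by linarith
  -- h_0 < 1
  have hp1lt : p 1 < 1 := by
    have h01 : p 0 + p 1 ≤ ∑' k, p k := by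
      have := Summable.sum_le_tsum ({0, 1} : Finset ℕ) (fun k _ => hp k) hsum
      simpa using this
    rw [htotal] at h01; linarith
  have hh0lt : hc 0 < 1 := lt_of_le_of_lt (hhc_le 0) hp1lt
  have hh0nonneg : (0 : ℝ) ≤ hc 0 := hhc_nonneg 0
  -- the inverse power series
  have hconst : PowerSeries.constantCoeff (1 - H) ≠ 0 := by
    rw [map_sub, map_one, hH]
    have : PowerSeries.constantCoeff (PowerSeries.mk hc) = hc 0 := by
      simpa using PowerSeries.coeff_zero_eq_constantCoeff.symm ▸
        (PowerSeries.coeff_mk 0 hc)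
    rw [this]; intro hcontra; linarith [sub_eq_zero.mp hcontra]
  have hinv : (1 - H) * (1 - H)⁻¹ = 1 := PowerSeries.mul_inv_cancel _ hconst
  set v : ℕ → ℝ := fun n => PowerSeries.coeff n (1 - H)⁻¹ with hv
  have hHc : ∀ n, PowerSeries.coeff n H = hc n := fun n => by
    rw [hH, PowerSeries.coeff_mk]
  -- recurrence for v
  have hrec : ∀ n, v n = (if n = 0 then (1 : ℝ) else 0)
      + ∑ kl ∈ Finset.HasAntidiagonal.antidiagonal n, hc kl.1 * v kl.2 := by
    intro n
    have h1 : (1 - H)⁻¹ = 1 + H * (1 - H)⁻¹ := by linear_combination hinv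
    calc v n = PowerSeries.coeff n (1 + H * (1 - H)⁻¹) := by rw [hv]; rw [← h1]
      _ = _ := by
        rw [map_add, PowerSeries.coeff_one, PowerSeries.coeff_mul]
        congr 1
        exact Finset.sum_congr rfl fun kl _ => by rw [hHc]
  -- recurrence in range form
  have hrec' : ∀ n, v n * (1 - hc 0) = (if n = 0 then (1 : ℝ) else 0)
      + ∑ k ∈ Finset.range n, hc (k + 1) * v (n - (k + 1)) := by
    intro n
    have := hrec n
    rw [Finset.Nat.sum_antidiagonal_eq_sum_range_succ_mk] at this
    rw [Finset.sum_range_succ'] at this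
    simp only [Nat.sub_zero] at this
    have : v n = (if n = 0 then (1:ℝ) else 0)
        + (∑ k ∈ Finset.range n, hc (k + 1) * v (n - (k + 1)) + hc 0 * v n) := this
    ring_nf
    ring_nf at this
    linarith [this]
  -- nonnegativity of v
  have hvnonneg : ∀ n, 0 ≤ v n := by
    intro n
    induction n using Nat.strong_induction_on with
    | _ n ih =>
      have h2 := hrec' n
      have hrhs : 0 ≤ (if n = 0 then (1 : ℝ) else 0)
          + ∑ k ∈ Finset.range n, hc (k + 1) * v (n - (k + 1)) := by
        apply add_nonneg
        · split <;> norm_num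
        · apply Finset.sum_nonneg
          intro k hk
          exact mul_nonneg (hhc_nonneg _) (ih _ (by simp at hk; omega))
      nlinarith [h2, hh0lt]
  -- Step E: summability facts and choice of r
  have hsum1 : Summable (fun j => p (j + 1)) := (summable_nat_add_iff 1).2 hsum
  have hfc_summable : Summable fc := hsum.of_nonneg_of_le hfc_nonneg hfc_le
  have hhc_summable : Summable hc :=
    Summable.of_nonneg_of_le hhc_nonneg hhc_le hsum1
  set h1 : ℝ := ∑' j, hc j with hh1
  have hfs1 : Summable (fun j => fc (j + 1)) := (summable_nat_add_iff 1).2 hfc_summable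
  have hh1_eq : h1 = 1 - ∑' k, fc k := by
    have hsplit : ∀ j, hc j = p (j + 1) - fc (j + 1) := by
      intro j; simp only [hhc, hfc]; split_ifs <;> ring
    have e1 : h1 = ∑' j, (p (j + 1) - fc (j + 1)) := tsum_congr hsplit
    rw [e1, Summable.tsum_sub hsum1 hfs1]
    have e2 : ∑' j, p (j + 1) = 1 - p 0 := by
      have := Summable.tsum_eq_zero_add hsum
      rw [htotal] at this; linarith
    have e3 : ∑' j, fc (j + 1) = (∑' k, fc k) - p 0 := by
      have := Summable.tsum_eq_zero_add hfc_summable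
      have hfc0 : fc 0 = p 0 := by simp [hfc, h0Ω]
      rw [hfc0] at this; linarith
    rw [e2, e3]; ring
  have hh1lt : h1 < 1 := by rw [hh1_eq]; linarith
  have hh1nonneg : 0 ≤ h1 := tsum_nonneg hhc_nonneg
  set ε0 : ℝ := (1 - h1) / 4 with hε0
  have hε0pos : 0 < ε0 := by rw [hε0]; linarith
  have hδshift : Summable (fun j => p (j + 1) * (1 + δ) ^ (j + 1)) :=
    (summable_nat_add_iff 1).2 hδsum
  have hhδ : Summable (fun j => hc j * (1 + δ) ^ j) := by
    refine Summable.of_nonneg_of_le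
      (fun j => mul_nonneg (hhc_nonneg j) (by positivity)) (fun j => ?_) hδshift
    calc hc j * (1 + δ) ^ j ≤ p (j + 1) * (1 + δ) ^ j :=
          mul_le_mul_of_nonneg_right (hhc_le j) (by positivity)
      _ ≤ p (j + 1) * (1 + δ) ^ (j + 1) :=
          mul_le_mul_of_nonneg_left (pow_le_pow_right₀ hδ1 (Nat.le_succ j)) (hp _)
  have htail : Filter.Tendsto (fun N => ∑' k, hc (k + N) * (1 + δ) ^ (k + N))
      Filter.atTop (nhds 0) := tendsto_sum_nat_add (fun j => hc j * (1 + δ) ^ j)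
  obtain ⟨N, hN⟩ := (htail.eventually (gt_mem_nhds hε0pos)).exists
  have hrex : ∃ r : ℝ, 1 < r ∧ r < 1 + δ ∧ r ^ N < 1 + ε0 / (h1 + 1) := by
    have hc1 : (0:ℝ) < ε0 / (h1 + 1) := by positivity
    have h1' : Filter.Tendsto (fun r : ℝ => r ^ N) (nhdsWithin 1 (Set.Ioi 1)) (nhds 1) := by
      have := (continuous_pow N).tendsto (1 : ℝ)
      simpa using this.mono_left nhdsWithin_le_nhds
    have hev1 : ∀ᶠ r in nhdsWithin (1:ℝ) (Set.Ioi 1), r ^ N < 1 + ε0 / (h1 + 1) :=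
      h1'.eventually (gt_mem_nhds (by linarith))
    have hev2 : ∀ᶠ r in nhdsWithin (1:ℝ) (Set.Ioi 1), r < 1 + δ :=
      Filter.Eventually.filter_mono nhdsWithin_le_nhds (gt_mem_nhds (by linarith))
    have hev3 : ∀ᶠ r in nhdsWithin (1:ℝ) (Set.Ioi 1), 1 < r := self_mem_nhdsWithin
    obtain ⟨r, h3, h2, h1r⟩ := (hev3.and (hev2.and hev1)).exists
    exact ⟨r, h3, h2, h1r⟩
  obtain ⟨r, hr1, hrδ, hrN⟩ := hrex
  have hr0 : (0:ℝ) < r := by linarith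
  have hr1le : (1:ℝ) ≤ r := hr1.le
  have hrδle : r ≤ 1 + δ := hrδ.le
  have hrpow : ∀ j : ℕ, r ^ j ≤ (1 + δ) ^ j := fun j => pow_le_pow_left₀ hr0.le hrδle j
  have hhr : Summable (fun j => hc j * r ^ j) := by
    refine Summable.of_nonneg_of_le
      (fun j => mul_nonneg (hhc_nonneg j) (by positivity)) (fun j => ?_) hhδ
    exact mul_le_mul_of_nonneg_left (hrpow j) (hhc_nonneg j)
  set A : ℝ := ∑' j, hc j * r ^ j with hA
  have hA_nonneg : 0 ≤ A :=
    tsum_nonneg (fun j => mul_nonneg (hhc_nonneg j) (by positivity))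
  have hAlt : A < 1 := by
    have hsplitA : ∑ j ∈ Finset.range N, hc j * r ^ j
        + ∑' k, hc (k + N) * r ^ (k + N) = A := Summable.sum_add_tsum_nat_add N hhr
    have hfinite : ∑ j ∈ Finset.range N, hc j * r ^ j ≤ h1 + ε0 := by
      have step1 : ∑ j ∈ Finset.range N, hc j * r ^ j
          ≤ ∑ j ∈ Finset.range N, hc j * r ^ N := by
        refine Finset.sum_le_sum (fun j hj => ?_)
        exact mul_le_mul_of_nonneg_left
          (pow_le_pow_right₀ hr1le (Finset.mem_range.mp hj).le) (hhc_nonneg j)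
      have step2 : ∑ j ∈ Finset.range N, hc j * r ^ N
          = r ^ N * ∑ j ∈ Finset.range N, hc j := by
        rw [Finset.mul_sum]; exact Finset.sum_congr rfl (fun j _ => by ring)
      have step3 : ∑ j ∈ Finset.range N, hc j ≤ h1 :=
        Summable.sum_le_tsum _ (fun j _ => hhc_nonneg j) hhc_summable
      have step4 : r ^ N * ∑ j ∈ Finset.range N, hc j ≤ r ^ N * h1 :=
        mul_le_mul_of_nonneg_left step3 (by positivity)
      have step5 : r ^ N * h1 ≤ (1 + ε0 / (h1 + 1)) * h1 :=
        mul_le_mul_of_nonneg_right hrN.le hh1nonneg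
      have step6 : (1 + ε0 / (h1 + 1)) * h1 ≤ h1 + ε0 := by
        have hd : 0 < h1 + 1 := by linarith
        have hkey : ε0 / (h1 + 1) * h1 ≤ ε0 := by
          rw [div_mul_eq_mul_div, div_le_iff₀ hd]; nlinarith
        nlinarith
      linarith
    have htail2 : ∑' k, hc (k + N) * r ^ (k + N) ≤ ε0 := by
      have hcmp : ∀ k, hc (k + N) * r ^ (k + N) ≤ hc (k + N) * (1 + δ) ^ (k + N) :=
        fun k => mul_le_mul_of_nonneg_left (hrpow _) (hhc_nonneg _)
      have hsl : Summable (fun k => hc (k + N) * r ^ (k + N)) :=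
        (summable_nat_add_iff N).2 hhr
      have hsr : Summable (fun k => hc (k + N) * (1 + δ) ^ (k + N)) :=
        (summable_nat_add_iff N).2 hhδ
      exact le_trans (Summable.tsum_le_tsum hcmp hsl hsr) hN.le
    have : A ≤ h1 + 2 * ε0 := by linarith
    rw [hε0] at this; linarith
  -- Step F: summability of coefficients times r^n
  set b : ℕ → ℝ := fun n => v n * r ^ n with hb
  have hbnonneg : ∀ n, 0 ≤ b n := fun n => mul_nonneg (hvnonneg n) (by positivity)
  have hbrec : ∀ n, b n = (if n = 0 then (1:ℝ) else 0)
      + ∑ kl ∈ Finset.HasAntidiagonal.antidiagonal n, (hc kl.1 * r ^ kl.1) * (v kl.2 * r ^ kl.2) := by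
    intro n
    have e : b n = ((if n = 0 then (1:ℝ) else 0)
        + ∑ kl ∈ Finset.HasAntidiagonal.antidiagonal n, hc kl.1 * v kl.2) * r ^ n := by
      rw [hb]; simp only; rw [← hrec n]
    rw [e, add_mul, Finset.sum_mul]
    congr 1
    · split_ifs with h
      · subst h; simp
      · simp
    · refine Finset.sum_congr rfl (fun kl hkl => ?_)
      have hkln : kl.1 + kl.2 = n := Finset.HasAntidiagonal.mem_antidiagonal.mp hkl
      rw [← hkln, pow_add]; ring
  have hBbound : ∀ K, ∑ n ∈ Finset.range K, b n ≤ 1 / (1 - A) := by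
    intro K
    have hBnonneg : (0:ℝ) ≤ ∑ n ∈ Finset.range K, b n :=
      Finset.sum_nonneg (fun n _ => hbnonneg n)
    have hBsum : ∑ n ∈ Finset.range K, b n
        ≤ 1 + A * ∑ n ∈ Finset.range K, b n := by
      calc ∑ n ∈ Finset.range K, b n
          = ∑ n ∈ Finset.range K, ((if n = 0 then (1:ℝ) else 0)
            + ∑ kl ∈ Finset.HasAntidiagonal.antidiagonal n, (hc kl.1 * r ^ kl.1) * (v kl.2 * r ^ kl.2)) :=
            Finset.sum_congr rfl (fun n _ => hbrec n)
        _ = (∑ n ∈ Finset.range K, if n = 0 then (1:ℝ) else 0)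
            + ∑ n ∈ Finset.range K, ∑ kl ∈ Finset.HasAntidiagonal.antidiagonal n,
                (hc kl.1 * r ^ kl.1) * (v kl.2 * r ^ kl.2) := Finset.sum_add_distrib
        _ ≤ 1 + (∑ i ∈ Finset.range K, hc i * r ^ i) * (∑ j ∈ Finset.range K, b j) := by
            refine add_le_add ?_ ?_
            · rw [Finset.sum_ite_eq' (Finset.range K) 0 (fun _ => (1:ℝ))]
              split_ifs <;> norm_num
            · exact aux_triangle _ _
                (fun i => mul_nonneg (hhc_nonneg i) (by positivity)) hbnonneg K
        _ ≤ 1 + A * ∑ j ∈ Finset.range K, b j := by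
            have hpart : ∑ i ∈ Finset.range K, hc i * r ^ i ≤ A :=
              Summable.sum_le_tsum _ (fun i _ => mul_nonneg (hhc_nonneg i) (by positivity)) hhr
            nlinarith
    rw [le_div_iff₀ (by linarith)]
    nlinarith
  have hbsummable : Summable b := summable_of_sum_range_le hbnonneg hBbound
  -- coefficients of G
  have hq : ∀ n, PowerSeries.coeff n G
      = ∑ kl ∈ Finset.HasAntidiagonal.antidiagonal n, fc kl.1 * v kl.2 := by
    intro n
    rw [hG, PowerSeries.coeff_mul]
    refine Finset.sum_congr rfl (fun kl _ => ?_)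
    rw [hF, PowerSeries.coeff_mk]
  set c : ℕ → ℝ := fun n => PowerSeries.coeff n G * r ^ n with hcdef
  have hcrec : ∀ n, c n
      = ∑ kl ∈ Finset.HasAntidiagonal.antidiagonal n, (fc kl.1 * r ^ kl.1) * b kl.2 := by
    intro n
    have e : c n = (∑ kl ∈ Finset.HasAntidiagonal.antidiagonal n, fc kl.1 * v kl.2) * r ^ n := by
      rw [hcdef]; simp only; rw [hq n]
    rw [e, Finset.sum_mul]
    refine Finset.sum_congr rfl (fun kl hkl => ?_)
    have hkln : kl.1 + kl.2 = n := Finset.HasAntidiagonal.mem_antidiagonal.mp hkl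
    rw [hb]; simp only; rw [← hkln, pow_add]; ring
  have hcnonneg : ∀ n, 0 ≤ c n := by
    intro n
    rw [hcrec n]
    exact Finset.sum_nonneg (fun kl _ =>
      mul_nonneg (mul_nonneg (hfc_nonneg _) (by positivity)) (hbnonneg _))
  have hfr : Summable (fun i => fc i * r ^ i) := by
    refine Summable.of_nonneg_of_le
      (fun i => mul_nonneg (hfc_nonneg i) (by positivity)) (fun i => ?_) hδsum
    exact mul_le_mul (hfc_le i) (hrpow i) (by positivity) (hp i)
  have hCbound : ∀ K, ∑ n ∈ Finset.range K, c n
      ≤ (∑' i, fc i * r ^ i) * (∑' j, b j) := by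
    intro K
    have e : ∑ n ∈ Finset.range K, c n
        = ∑ n ∈ Finset.range K, ∑ kl ∈ Finset.HasAntidiagonal.antidiagonal n,
            (fc kl.1 * r ^ kl.1) * b kl.2 :=
      Finset.sum_congr rfl (fun n _ => hcrec n)
    rw [e]
    refine le_trans (aux_triangle _ _
      (fun i => mul_nonneg (hfc_nonneg i) (by positivity)) hbnonneg K) ?_
    refine mul_le_mul (Summable.sum_le_tsum _ (fun i _ =>
        mul_nonneg (hfc_nonneg i) (by positivity)) hfr)
      (Summable.sum_le_tsum _ (fun j _ => hbnonneg j) hbsummable)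
      (Finset.sum_nonneg (fun j _ => hbnonneg j))
      (tsum_nonneg (fun i => mul_nonneg (hfc_nonneg i) (by positivity)))
  have hcsummable : Summable c := summable_of_sum_range_le hcnonneg
    (fun K => hCbound K)
  -- conclusion
  constructor
  · set rn : NNReal := ⟨r, hr0.le⟩ with hrn
    have hsummn : Summable (fun n =>
        (fun k => PowerSeries.coeff k G) n * ((rn : NNReal) : ℝ) ^ n) := hcsummable
    have hle : (rn : ℝ≥0∞) ≤ radiusOfCoeff (fun k => PowerSeries.coeff k G) := by
      exact le_iSup₂ (f := fun (s : NNReal)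
        (_ : Summable fun n => PowerSeries.coeff n G * (s : ℝ) ^ n) => (s : ℝ≥0∞)) rn hsummn
    refine lt_of_lt_of_le ?_ hle
    rw [← ENNReal.coe_one, ENNReal.coe_lt_coe]
    exact_mod_cast hr1
  · refine ⟨r - 1, by linarith, ?_⟩
    have : (1 : ℝ) + (r - 1) = r := by ring
    rw [this]
    exact hcsummable
end
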